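/- arXiv:1203.1584 — 8 statements merged into one kernel-verified Lean document; each statement's English description precedes it below -/
import Mathlib

section
/- If G is a connected graph of order n with diameter d, then the metric dimension of G is at most n - d. -/
open SimpleGraph

/-- `W` is a resolving set for `G`: distinct vertices have distinct distance vectors to `W`. -/
def Resolves {V : Type*} (G : SimpleGraph V) (W : Set V) : Prop :=
  ∀ u v : V, u ≠ v → ∃ w ∈ W, G.dist u w ≠ G.dist v w

/-- The metric dimension of `G`: minimum cardinality of a resolving set. -/
noncomputable def metricDim {V : Type*} [Fintype V] (G : SimpleGraph V) : ℕ :=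
  sInf {k | ∃ W : Finset V, W.card = k ∧ Resolves G ↑W}

private lemma exists_prefix_walk {V : Type*} {G : SimpleGraph V} :
    ∀ {u v : V} (p : G.Walk u v) (i : ℕ), ∃ w : G.Walk u (p.getVert i), w.length ≤ i := by
  intro u v p
  induction p with
  | nil => intro i; exact ⟨(SimpleGraph.Walk.nil).copy rfl (by simp [SimpleGraph.Walk.getVert]), by simp⟩
  | cons h q ih =>
    intro i
    cases i with
    | zero => exact ⟨(SimpleGraph.Walk.nil).copy rfl (by simp), by simp⟩
    | succ n =>
      obtain ⟨w, hw⟩ := ih n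
      rw [SimpleGraph.Walk.getVert_cons_succ]
      exact ⟨w.cons h, by simpa using Nat.succ_le_succ hw⟩

private lemma exists_suffix_walk {V : Type*} {G : SimpleGraph V} :
    ∀ {u v : V} (p : G.Walk u v) (i : ℕ), ∃ w : G.Walk (p.getVert i) v, w.length ≤ p.length - i := by
  intro u v p
  induction p with
  | nil => intro i; exact ⟨(SimpleGraph.Walk.nil).copy (by simp [SimpleGraph.Walk.getVert]) rfl, by simp⟩
  | cons h q ih =>
    intro i
    cases i with
    | zero => exact ⟨(q.cons h).copy (by simp) rfl, by simp⟩
    | succ n =>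
      obtain ⟨w, hw⟩ := ih n
      rw [SimpleGraph.Walk.getVert_cons_succ]
      exact ⟨w, by simpa using hw.trans (by omega)⟩

private lemma dist_getVert {V : Type*} {G : SimpleGraph V} {u v : V} (p : G.Walk u v)
    (hp : p.length = G.dist u v) {i : ℕ} (hi : i ≤ p.length) :
    G.dist u (p.getVert i) = i := by
  obtain ⟨w1, hw1⟩ := exists_prefix_walk p i
  obtain ⟨w2, hw2⟩ := exists_suffix_walk p i
  have h1 : G.dist u (p.getVert i) ≤ i := (SimpleGraph.dist_le w1).trans hw1
  have h2 : G.dist (p.getVert i) v ≤ p.length - i := (SimpleGraph.dist_le w2).trans hw2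
  obtain ⟨a, ha⟩ := w1.reachable.exists_walk_length_eq_dist
  have h4 : G.dist u v ≤ a.length + w2.length := by
    simpa [SimpleGraph.Walk.length_append] using SimpleGraph.dist_le (a.append w2)
  have hwl : w2.length ≤ p.length - i := hw2
  have hal : a.length = G.dist u (p.getVert i) := ha
  omega

theorem stmt0 {V : Type*} [Fintype V] (G : SimpleGraph V) (hG : G.Connected) :
    metricDim G ≤ Fintype.card V - G.diam := by
  classical
  by_cases hV : Nonempty V
  · obtain ⟨u, v, huv⟩ := G.exists_dist_eq_diam
    obtain ⟨p, hp⟩ := (hG u v).exists_walk_length_eq_dist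
    set d := G.diam with hd
    have hplen : p.length = d := by rw [hp, huv]
    have hdist : ∀ i ≤ d, G.dist u (p.getVert i) = i := by
      intro i hi
      exact dist_getVert p hp (by omega)
    set S : Finset V := (Finset.range d).image (fun i => p.getVert (i + 1)) with hS
    have hScard : S.card = d := by
      rw [hS, Finset.card_image_of_injOn, Finset.card_range]
      intro i hi j hj hij
      simp only [Finset.coe_range, Set.mem_Iio] at hi hj
      simp only at hij
      have h1 := hdist (i + 1) (by omega)
      have h2 := hdist (j + 1) (by omega)
      rw [hij, h2] at h1
      omega
    have huS : u ∉ S := by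
      intro hmem
      rw [hS, Finset.mem_image] at hmem
      obtain ⟨i, hi, hgi⟩ := hmem
      rw [Finset.mem_range] at hi
      have h0 := hdist (i + 1) (by omega)
      rw [hgi, SimpleGraph.dist_self] at h0
      omega
    set W : Finset V := Sᶜ with hWdef
    have hWcard : W.card = Fintype.card V - d := by
      rw [hWdef, Finset.card_compl, hScard]
    apply Nat.sInf_le
    refine ⟨W, hWcard, ?_⟩
    intro a b hab
    by_cases haW : a ∈ W
    · refine ⟨a, by simpa using haW, ?_⟩
      rw [SimpleGraph.dist_self]
      exact (hG.pos_dist_of_ne hab.symm).ne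
    by_cases hbW : b ∈ W
    · refine ⟨b, by simpa using hbW, ?_⟩
      rw [SimpleGraph.dist_self]
      exact (hG.pos_dist_of_ne hab).ne'
    · have haS : a ∈ S := by simpa [hWdef] using haW
      have hbS : b ∈ S := by simpa [hWdef] using hbW
      rw [hS] at haS hbS
      simp only [Finset.mem_image, Finset.mem_range] at haS hbS
      obtain ⟨i, hi, ha⟩ := haS
      obtain ⟨j, hj, hb⟩ := hbS
      refine ⟨u, by simpa [hWdef] using huS, ?_⟩
      have hda : G.dist a u = i + 1 := by
        rw [SimpleGraph.dist_comm, ← ha, hdist (i + 1) (by omega)]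
      have hdb : G.dist b u = j + 1 := by
        rw [SimpleGraph.dist_comm, ← hb, hdist (j + 1) (by omega)]
      rw [hda, hdb]
      intro h
      apply hab
      rw [← ha, ← hb]
      have hij : i = j := by omega
      rw [hij]

  · calc metricDim G ≤ 0 := Nat.sInf_le ⟨∅, Finset.card_empty, fun a => (hV ⟨a⟩).elim⟩
      _ ≤ _ := Nat.zero_le _
end

section
/- If G is a connected graph of order n, then β(G) = n - 1 if and only if G is the complete graph K_n. -/
open SimpleGraph

theorem stmt1 {V : Type*} [Fintype V] (G : SimpleGraph V) (hG : G.Connected) :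
    metricDim G = Fintype.card V - 1 ↔ G = ⊤ := by
  classical
  constructor
  · intro h
    by_contra hne
    -- get distinct nonadjacent vertices
    obtain ⟨u, v, huv, hnadj⟩ : ∃ u v : V, u ≠ v ∧ ¬ G.Adj u v := by
      by_contra hc
      push_neg at hc
      apply hne
      ext a b
      simp only [top_adj]
      exact ⟨fun ha => ha.ne, fun hab => hc a b hab⟩
    have hd2 : 2 ≤ G.dist u v := by
      rcases Nat.lt_or_ge (G.dist u v) 2 with h2 | h2
      · interval_cases hd : G.dist u v
        · exact absurd (hG.dist_eq_zero_iff.mp hd) huv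
        · exact absurd (SimpleGraph.dist_eq_one_iff_adj.mp hd) hnadj
      · exact h2
    obtain ⟨p, hp⟩ := hG.exists_walk_length_eq_dist u v
    have hpnil : ¬ p.Nil := by
      rw [SimpleGraph.Walk.not_nil_iff_lt_length, hp]; omega
    set x := p.getVert 1 with hx
    have hadjux : G.Adj u x := p.adj_snd hpnil
    have hux : u ≠ x := hadjux.ne
    have hxv : G.dist x v < G.dist u v := by
      have := SimpleGraph.dist_le p.tail
      have hlen : p.tail.length + 1 = p.length := SimpleGraph.Walk.length_tail_add_one hpnil
      have hxx : G.dist x v = G.dist (p.getVert 1) v := rfl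
      have hsnd : G.dist p.snd v = G.dist (p.getVert 1) v := rfl
      omega
    have hvx : v ≠ x := by
      intro hvx; rw [hvx] at hnadj; exact hnadj hadjux
    -- the resolving set of size n - 2
    set W : Finset V := Finset.univ \ {u, x} with hW
    have hcard : W.card = Fintype.card V - 2 := by
      rw [hW, Finset.card_sdiff_of_subset (Finset.subset_univ _), Finset.card_univ,
        Finset.card_insert_of_notMem (by simpa using hux), Finset.card_singleton]
    have hres : Resolves G ↑W := by
      intro a b hab
      by_cases ha : a ∈ W
      · exact ⟨a, ha, by
          have h0 : G.dist a a = 0 := SimpleGraph.dist_self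
          have h1 : G.dist b a ≠ 0 :=
            fun h0' => hab.symm (hG.dist_eq_zero_iff.mp h0')
          omega⟩
      · by_cases hb : b ∈ W
        · exact ⟨b, hb, by
            have h0 : G.dist b b = 0 := SimpleGraph.dist_self
            have h1 : G.dist a b ≠ 0 :=
              fun h0' => hab (hG.dist_eq_zero_iff.mp h0')
            omega⟩
        · -- a, b ∈ {u, x}
          have ha' : a = u ∨ a = x := by
            simp only [hW, Finset.mem_sdiff, Finset.mem_univ, true_and, not_not,
              Finset.mem_insert, Finset.mem_singleton] at ha
            exact ha
          have hb' : b = u ∨ b = x := by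
            simp only [hW, Finset.mem_sdiff, Finset.mem_univ, true_and, not_not,
              Finset.mem_insert, Finset.mem_singleton] at hb
            exact hb
          have hvW : v ∈ W := by
            simp [hW, Ne.symm huv, hvx]
          refine ⟨v, by simpa using hvW, ?_⟩
          have hdx : G.dist x v ≠ G.dist u v := Nat.ne_of_lt hxv
          rcases ha' with rfl | rfl <;> rcases hb' with rfl | rfl
          · exact absurd rfl hab
          · exact fun hh => hdx hh.symm
          · exact hdx
          · exact absurd rfl hab
    have hle : metricDim G ≤ Fintype.card V - 2 :=
      Nat.sInf_le ⟨W, hcard, hres⟩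
    have hn2 : 2 ≤ Fintype.card V := Fintype.one_lt_card_iff_nontrivial.mpr ⟨u, x, hux⟩
    omega
  · rintro rfl
    set n := Fintype.card V with hn
    have hmem : n - 1 ∈ {k | ∃ W : Finset V, W.card = k ∧ Resolves (⊤ : SimpleGraph V) ↑W} := by
      by_cases hV : Nonempty V
      · obtain ⟨v0⟩ := hV
        refine ⟨Finset.univ.erase v0, ?_, ?_⟩
        · rw [Finset.card_erase_of_mem (Finset.mem_univ _), Finset.card_univ]
        · intro a b hab
          by_cases hav : a = v0
          · refine ⟨b, by simp [hav ▸ hab.symm], ?_⟩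
            have h1 : (⊤ : SimpleGraph V).dist a b = 1 :=
              SimpleGraph.dist_eq_one_iff_adj.mpr (by simp [hab])
            have h0 : (⊤ : SimpleGraph V).dist b b = 0 := SimpleGraph.dist_self
            omega
          · refine ⟨a, by simp [hav], ?_⟩
            have h1 : (⊤ : SimpleGraph V).dist b a = 1 :=
              SimpleGraph.dist_eq_one_iff_adj.mpr (by simp [Ne.symm hab])
            have h0 : (⊤ : SimpleGraph V).dist a a = 0 := SimpleGraph.dist_self
            omega
      · refine ⟨∅, ?_, ?_⟩
        · simp [hn, Fintype.card_eq_zero_iff.mpr (not_nonempty_iff.mp hV)]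
        · intro a b hab
          exact absurd ⟨a⟩ hV
    refine le_antisymm (Nat.sInf_le hmem) (le_csInf ⟨_, hmem⟩ ?_)
    rintro k ⟨W, hWcard, hWres⟩
    by_contra hk
    push_neg at hk
    have hcard2 : 2 ≤ (Finset.univ \ W).card := by
      rw [Finset.card_sdiff_of_subset (Finset.subset_univ _), Finset.card_univ, hWcard]
      omega
    obtain ⟨a, ha, b, hb, hab⟩ := Finset.one_lt_card.mp hcard2
    obtain ⟨w, hw, hdw⟩ := hWres a b hab
    simp only [Finset.coe_sdiff, Finset.mem_sdiff] at ha hb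
    have haw : a ≠ w := fun h => ha.2 (h ▸ hw)
    have hbw : b ≠ w := fun h => hb.2 (h ▸ hw)
    have h1 : (⊤ : SimpleGraph V).dist a w = 1 :=
      SimpleGraph.dist_eq_one_iff_adj.mpr (by simp [haw])
    have h2 : (⊤ : SimpleGraph V).dist b w = 1 :=
      SimpleGraph.dist_eq_one_iff_adj.mpr (by simp [hbw])
    omega
end

section
/- Let v be a cut vertex of a connected graph G and let W be a resolving set for G. Then W is disjoint from at most one connected component of G \ {v}. -/
open SimpleGraph

-- A walk in `G` avoiding `v` gives reachability in the induced graph on `{v}ᶜ`.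
lemma walk_avoid_reachable {V : Type*} (G : SimpleGraph V) (v : V) :
    ∀ {a b : V} (p : G.Walk a b), v ∉ p.support →
      ∀ (ha : a ∈ ({v}ᶜ : Set V)) (hb : b ∈ ({v}ᶜ : Set V)),
      (G.induce ({v}ᶜ : Set V)).Reachable ⟨a, ha⟩ ⟨b, hb⟩ := by
  intro a b p
  induction p with
  | nil => intro _ ha hb; rfl
  | @cons x y z h q ih =>
    intro hs ha hb
    rw [SimpleGraph.Walk.support_cons] at hs
    simp only [List.mem_cons, not_or] at hs
    have hy : y ∈ ({v}ᶜ : Set V) := by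
      intro hyv
      exact hs.2 (hyv ▸ q.start_mem_support)
    refine SimpleGraph.Reachable.trans ?_ (ih hs.2 hy hb)
    exact SimpleGraph.Adj.reachable (by exact h)

-- Each vertex distinct from v can reach, within G - v, a neighbor of v.
lemma exists_adj_reachable {V : Type*} (G : SimpleGraph V) (v : V) :
    ∀ {a b : V} (p : G.Walk a b), b = v →
      ∀ (ha : a ∈ ({v}ᶜ : Set V)),
      ∃ (y : V) (hy : y ∈ ({v}ᶜ : Set V)), G.Adj y v ∧
        (G.induce ({v}ᶜ : Set V)).Reachable ⟨a, ha⟩ ⟨y, hy⟩ := by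
  intro a b p
  induction p with
  | nil => intro hb ha; exact absurd hb ha
  | @cons x y z h q ih =>
    intro hb ha
    by_cases hy : y = v
    · exact ⟨x, ha, hy ▸ h, SimpleGraph.Reachable.refl _⟩
    · obtain ⟨w, hw, hadj, hr⟩ := ih hb hy
      exact ⟨w, hw, hadj, SimpleGraph.Reachable.trans
        (SimpleGraph.Adj.reachable (by exact h : (G.induce ({v}ᶜ : Set V)).Adj ⟨x, ha⟩ ⟨y, hy⟩)) hr⟩

theorem stmt3 {V : Type*} [Fintype V] (G : SimpleGraph V) (hG : G.Connected) (v : V)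
    (hv : ¬ (G.induce ({v}ᶜ : Set V)).Connected) (W : Set V) (hW : Resolves G W)
    (c d : (G.induce ({v}ᶜ : Set V)).ConnectedComponent)
    (hc : ∀ x ∈ c.supp, (x : V) ∉ W) (hd : ∀ x ∈ d.supp, (x : V) ∉ W) :
    c = d := by
  classical
  by_contra hcd
  -- find in each component a neighbor of v
  have key : ∀ (e : (G.induce ({v}ᶜ : Set V)).ConnectedComponent),
      ∃ (y : {x // x ∈ ({v}ᶜ : Set V)}), y ∈ e.supp ∧ G.Adj (y : V) v := by
    intro e
    obtain ⟨⟨a, ha⟩, rfl⟩ := e.exists_rep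
    obtain ⟨p⟩ := hG a v
    obtain ⟨y, hy, hadj, hr⟩ := exists_adj_reachable G v p rfl ha
    exact ⟨⟨y, hy⟩, (SimpleGraph.ConnectedComponent.mem_supp_iff _ _).2
      (SimpleGraph.ConnectedComponent.sound hr.symm), hadj⟩
  obtain ⟨x, hxc, hxadj⟩ := key c
  obtain ⟨y, hyd, hyadj⟩ := key d
  have hxy : (x : V) ≠ (y : V) := by
    intro h
    apply hcd
    have : x = y := Subtype.ext h
    rw [← (SimpleGraph.ConnectedComponent.mem_supp_iff _ _).1 hxc,
      ← (SimpleGraph.ConnectedComponent.mem_supp_iff _ _).1 hyd, this]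
  obtain ⟨w, hwW, hwdist⟩ := hW _ _ hxy
  -- any walk from x (or y) to w must pass through v
  have through : ∀ (e : (G.induce ({v}ᶜ : Set V)).ConnectedComponent)
      (z : {x // x ∈ ({v}ᶜ : Set V)}), z ∈ e.supp → (∀ u ∈ e.supp, (u : V) ∉ W) →
      ∀ (p : G.Walk (z : V) w), v ∈ p.support := by
    intro e z hz he p
    by_contra hvp
    have hw : w ∈ ({v}ᶜ : Set V) := by
      intro hwv
      exact hvp (hwv ▸ p.end_mem_support)
    have hr := walk_avoid_reachable G v p hvp z.2 hw
    have : (⟨w, hw⟩ : {x // x ∈ ({v}ᶜ : Set V)}) ∈ e.supp := by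
      rw [SimpleGraph.ConnectedComponent.mem_supp_iff]
      rw [SimpleGraph.ConnectedComponent.mem_supp_iff] at hz
      rw [← hz]
      exact (SimpleGraph.ConnectedComponent.sound hr.symm)
    exact he _ this hwW
  -- hence dist z w = 1 + dist v w for z adjacent to v in such a component
  have distEq : ∀ (e : (G.induce ({v}ᶜ : Set V)).ConnectedComponent)
      (z : {x // x ∈ ({v}ᶜ : Set V)}), z ∈ e.supp → (∀ u ∈ e.supp, (u : V) ∉ W) →
      G.Adj (z : V) v → G.dist (z : V) w = 1 + G.dist v w := by
    intro e z hz he hadj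
    have hd1 : G.dist (z : V) v = 1 := SimpleGraph.dist_eq_one_iff_adj.2 hadj
    refine le_antisymm ?_ ?_
    · calc G.dist (z : V) w ≤ G.dist (z : V) v + G.dist v w := hG.dist_triangle
        _ = 1 + G.dist v w := by rw [hd1]
    · obtain ⟨p, hp⟩ := hG.exists_walk_length_eq_dist (z : V) w
      have hvp : v ∈ p.support := through e z hz he p
      have hsplit := p.take_spec hvp
      have : (p.takeUntil v hvp).length + (p.dropUntil v hvp).length = p.length := by
        rw [← SimpleGraph.Walk.length_append, hsplit]
      have h1 : 1 ≤ (p.takeUntil v hvp).length := by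
        have h := SimpleGraph.dist_le (p.takeUntil v hvp)
        omega
      have h2 : G.dist v w ≤ (p.dropUntil v hvp).length := SimpleGraph.dist_le _
      have h1' : G.dist (z : V) v ≤ (p.takeUntil v hvp).length := SimpleGraph.dist_le _
      omega
  have e1 := distEq c x hxc hc hxadj
  have e2 := distEq d y hyd hd hyadj
  exact hwdist (e1.trans e2.symm)
end

section
/- Let v be a cut vertex of a connected graph G and let W be a resolving set for G that intersects at least two connected components of G \ {v}. Then W \ {v} is also a resolving set for G. -/
open SimpleGraph

private lemma reach_of_walk {V : Type*} {G : SimpleGraph V} {v : V} :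
    ∀ {a b : V} (p : G.Walk a b), v ∉ p.support → ∀ (ha : a ∈ ({v}ᶜ : Set V))
      (hb : b ∈ ({v}ᶜ : Set V)),
      (G.induce ({v}ᶜ : Set V)).Reachable ⟨a, ha⟩ ⟨b, hb⟩ := by
  intro a b p
  induction p with
  | nil => intro _ ha hb; exact Reachable.refl _
  | @cons a c b h p ih =>
    intro hs ha hb
    have hc : c ∈ ({v}ᶜ : Set V) := by
      simp only [Walk.support_cons, List.mem_cons] at hs
      intro hcv
      exact hs (Or.inr (by rw [← hcv]; exact p.start_mem_support))
    have hs' : v ∉ p.support := fun hv => hs (by simp [Walk.support_cons, hv])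
    have hadj : (G.induce ({v}ᶜ : Set V)).Adj ⟨a, ha⟩ ⟨c, hc⟩ := by
      simpa using h
    exact hadj.reachable.trans (ih hs' hc hb)

private lemma key_dist {V : Type*} {G : SimpleGraph V} (hG : G.Connected) {v a b : V}
    (ha : a ∈ ({v}ᶜ : Set V)) (hb : b ∈ ({v}ᶜ : Set V))
    (h : (G.induce ({v}ᶜ : Set V)).connectedComponentMk ⟨a, ha⟩ ≠
      (G.induce ({v}ᶜ : Set V)).connectedComponentMk ⟨b, hb⟩) :
    G.dist a b = G.dist a v + G.dist v b := by
  classical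
  refine le_antisymm (hG.dist_triangle) ?_
  obtain ⟨p, hp⟩ := (hG a b).exists_walk_length_eq_dist
  have hvp : v ∈ p.support := by
    by_contra hvs
    exact h (ConnectedComponent.sound (reach_of_walk p hvs ha hb))
  calc G.dist a v + G.dist v b
      ≤ (p.takeUntil v hvp).length + (p.dropUntil v hvp).length :=
        add_le_add (dist_le _) (dist_le _)
    _ = p.length := by rw [← Walk.length_append, Walk.take_spec]
    _ = G.dist a b := hp

theorem stmt4 {V : Type*} [Fintype V] (G : SimpleGraph V) (hG : G.Connected) (v : V)
    (hv : ¬ (G.induce ({v}ᶜ : Set V)).Connected) (W : Set V) (hW : Resolves G W)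
    (x y : ({v}ᶜ : Set V))
    (hxy : (G.induce ({v}ᶜ : Set V)).connectedComponentMk x ≠
      (G.induce ({v}ᶜ : Set V)).connectedComponentMk y)
    (hx : (x : V) ∈ W) (hy : (y : V) ∈ W) :
    Resolves G (W \ {v}) := by
  classical
  set H := G.induce ({v}ᶜ : Set V) with hH
  have hxv : (x : V) ≠ v := x.2
  have hyv : (y : V) ≠ v := y.2
  -- for any u ≠ v, one of x, y lies in a different component of G - v
  have pick : ∀ (u : V) (hu : u ∈ ({v}ᶜ : Set V)),
      ∃ z : ({v}ᶜ : Set V), (z = x ∨ z = y) ∧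
        H.connectedComponentMk ⟨u, hu⟩ ≠ H.connectedComponentMk z := by
    intro u hu
    by_cases hc : H.connectedComponentMk ⟨u, hu⟩ = H.connectedComponentMk x
    · exact ⟨y, Or.inr rfl, fun h => hxy (hc ▸ h)⟩
    · exact ⟨x, Or.inl rfl, hc⟩
  intro u u' hne
  obtain ⟨w, hwW, hwd⟩ := hW u u' hne
  by_cases hwv : w = v
  · rw [hwv] at hwd
    by_cases huv : u = v
    · -- u = v, u' ≠ v
      have hu'v : u' ≠ v := fun h => hne (huv.trans h.symm)
      obtain ⟨z, hzxy, hz⟩ := pick u' hu'v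
      have hzW : (z : V) ∈ W := by rcases hzxy with rfl | rfl; exacts [hx, hy]
      refine ⟨z, ⟨hzW, z.2⟩, ?_⟩
      have hk := key_dist hG (hu'v : u' ∈ ({v}ᶜ : Set V)) z.2 hz
      have hpos : 0 < G.dist u' v := hG.pos_dist_of_ne hu'v
      rw [huv]
      omega
    · by_cases hu'v : u' = v
      · obtain ⟨z, hzxy, hz⟩ := pick u huv
        have hzW : (z : V) ∈ W := by rcases hzxy with rfl | rfl; exacts [hx, hy]
        refine ⟨z, ⟨hzW, z.2⟩, ?_⟩
        have hk := key_dist hG (huv : u ∈ ({v}ᶜ : Set V)) z.2 hz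
        have hpos : 0 < G.dist u v := hG.pos_dist_of_ne huv
        rw [hu'v]
        omega
      · -- u ≠ v and u' ≠ v
        by_cases h1 : G.dist u (x : V) ≠ G.dist u' (x : V)
        · exact ⟨x, ⟨hx, hxv⟩, h1⟩
        by_cases h2 : G.dist u (y : V) ≠ G.dist u' (y : V)
        · exact ⟨y, ⟨hy, hyv⟩, h2⟩
        push_neg at h1 h2
        exfalso
        apply hwd
        have same : ∀ z : ({v}ᶜ : Set V), z = x ∨ z = y →
            G.dist u (z : V) = G.dist u' (z : V) := by
          rintro z (rfl | rfl); exacts [h1, h2]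
        have le1 : G.dist u' v ≤ G.dist u v := by
          obtain ⟨z, hzxy, hz⟩ := pick u' hu'v
          have hk := key_dist hG (hu'v : u' ∈ ({v}ᶜ : Set V)) z.2 hz
          have htri : G.dist u (z : V) ≤ G.dist u v + G.dist v (z : V) :=
            hG.dist_triangle
          have hs := same z hzxy
          omega
        have le2 : G.dist u v ≤ G.dist u' v := by
          obtain ⟨z, hzxy, hz⟩ := pick u huv
          have hk := key_dist hG (huv : u ∈ ({v}ᶜ : Set V)) z.2 hz
          have htri : G.dist u' (z : V) ≤ G.dist u' v + G.dist v (z : V) :=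
            hG.dist_triangle
          have hs := same z hzxy
          omega
        omega
  · exact ⟨w, ⟨hwW, hwv⟩, hwd⟩
end

section
/- Let G be a connected graph of order n containing a cycle, with girth g(G). If β(G) = n - g(G) + 2, then G is 2-connected (G has no cut vertex and is not complete on too few vertices in the trivial sense). -/
open SimpleGraph

namespace MetDimAux

variable {V : Type*} {G : SimpleGraph V}

lemma getVert_mem_support {u w : V} (p : G.Walk u w) {n : ℕ} (hn : n ≤ p.length) :
    p.getVert n ∈ p.support :=
  Walk.mem_support_iff_exists_getVert.2 ⟨n, rfl, hn⟩

lemma IsPath.getVert_inj {u w : V} {p : G.Walk u w} (hp : p.IsPath) :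
    ∀ {i j : ℕ}, i ≤ p.length → j ≤ p.length → p.getVert i = p.getVert j → i = j := by
  induction p with
  | nil => intro i j hi hj _; simp [Walk.length_nil] at hi hj; omega
  | @cons u v w h q ih =>
    intro i j hi hj hij
    rw [Walk.length_cons] at hi hj
    match i, j with
    | 0, 0 => rfl
    | 0, (j+1) =>
      exfalso
      rw [Walk.getVert_zero, Walk.getVert_cons_succ] at hij
      exact ((Walk.cons_isPath_iff h q).1 hp).2 (hij ▸ getVert_mem_support q (by omega))
    | (i+1), 0 =>
      exfalso
      rw [Walk.getVert_zero, Walk.getVert_cons_succ] at hij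
      exact ((Walk.cons_isPath_iff h q).1 hp).2 (hij ▸ getVert_mem_support q (by omega))
    | (i+1), (j+1) =>
      rw [Walk.getVert_cons_succ, Walk.getVert_cons_succ] at hij
      have := ih ((Walk.cons_isPath_iff h q).1 hp).1 (by omega) (by omega) hij
      omega

lemma IsCycle.getVert_inj {x : V} {c : G.Walk x x} (hc : c.IsCycle) :
    ∀ {i j : ℕ}, i < c.length → j < c.length → c.getVert i = c.getVert j → i = j := by
  cases c with
  | nil => exact fun hi => by simp [Walk.length_nil] at hi
  | @cons u v w h q =>
    have hq : q.IsPath := by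
      have := hc.support_nodup
      rw [Walk.support_cons, List.tail_cons] at this
      exact (Walk.isPath_def q).2 this
    intro i j hi hj hij
    rw [Walk.length_cons] at hi hj
    match i, j with
    | 0, 0 => rfl
    | 0, (j+1) =>
      exfalso
      rw [Walk.getVert_zero, Walk.getVert_cons_succ] at hij
      have : q.length = j := IsPath.getVert_inj hq (le_refl _) (by omega) (by rw [Walk.getVert_length, ← hij])
      omega
    | (i+1), 0 =>
      exfalso
      rw [Walk.getVert_zero, Walk.getVert_cons_succ] at hij
      have : q.length = i := IsPath.getVert_inj hq (le_refl _) (by omega) (by rw [Walk.getVert_length, hij])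
      omega
    | (i+1), (j+1) =>
      rw [Walk.getVert_cons_succ, Walk.getVert_cons_succ] at hij
      have := IsPath.getVert_inj hq (by omega) (by omega) hij
      omega

/-- walk along the cycle from index `i` to index `i+k` -/
def arc {x : V} (c : G.Walk x x) : (i k : ℕ) → (h : i + k ≤ c.length) → G.Walk (c.getVert i) (c.getVert (i + k))
  | _, 0, _ => Walk.nil
  | i, (k+1), h => (arc c i k (by omega)).concat (c.adj_getVert_succ (by omega))

@[simp] lemma arc_length {x : V} (c : G.Walk x x) (i k : ℕ) (h : i + k ≤ c.length) :
    (arc c i k h).length = k := by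
  induction k with
  | zero => rfl
  | succ k ih => rw [arc, Walk.length_concat, ih]

lemma arc_support {x : V} (c : G.Walk x x) (i k : ℕ) (h : i + k ≤ c.length) :
    (arc c i k h).support = (List.range (k+1)).map (fun t => c.getVert (i + t)) := by
  induction k with
  | zero => simp [arc, Walk.support_nil, List.range_succ]
  | succ k ih =>
    rw [arc, Walk.support_concat, ih, List.range_succ (n := k+1), List.map_append]
    simp


lemma excursion_aux {x : V} {c : G.Walk x x} (hc : c.IsCycle)
    (hmin : ∀ (a : V) (w : G.Walk a a), w.IsCycle → c.length ≤ w.length)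
    {i j : ℕ} (hij : i ≤ j) (hi : i < c.length) (hj : j < c.length)
    (p : G.Walk (c.getVert i) (c.getVert j)) (hp : p.IsPath)
    (hint : ∀ z ∈ p.support, (∃ t, t < c.length ∧ z = c.getVert t) → z = c.getVert i ∨ z = c.getVert j) :
    min (Nat.dist i j) (c.length - Nat.dist i j) ≤ p.length := by
  rcases eq_or_lt_of_le hij with rfl | hlt
  · simp [Nat.dist_self]
  have hne : c.getVert i ≠ c.getVert j := fun h => absurd (IsCycle.getVert_inj hc hi hj h) (by omega)
  have hplen : 1 ≤ p.length := by
    by_contra hzero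
    exact hne (Walk.eq_of_length_eq_zero (p := p) (by omega))
  rcases eq_or_lt_of_le (show i + 1 ≤ j by omega) with hj1 | hj2
  · have : Nat.dist i j = 1 := by simp [Nat.dist]; omega
    omega
  · have harc : (i+1) + (j-i-1) ≤ c.length := by omega
    have hAend : c.getVert ((i+1) + (j-i-1)) = c.getVert j := by congr 1; omega
    set A := (arc c (i+1) (j-i-1) harc).copy rfl hAend with hA
    have hAsup : ∀ z ∈ A.support, ∃ t, i + 1 ≤ t ∧ t ≤ j ∧ z = c.getVert t := by
      intro z hz
      rw [hA, Walk.support_copy, arc_support] at hz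
      obtain ⟨t, ht, rfl⟩ := List.mem_map.1 hz
      rw [List.mem_range] at ht
      exact ⟨i + 1 + t, by omega, by omega, rfl⟩
    have hAnodup : A.support.Nodup := by
      rw [hA, Walk.support_copy, arc_support]
      refine List.Nodup.map_on ?_ List.nodup_range
      intro a ha b hb hab
      rw [List.mem_range] at ha hb
      have := IsCycle.getVert_inj hc (by omega) (by omega) hab
      omega
    set Q := A.append p.reverse with hQ
    have hQsup : Q.support = A.support ++ p.reverse.support.tail := Walk.support_append _ _
    have hrevsup : p.reverse.support = c.getVert j :: p.reverse.support.tail := Walk.support_eq_cons _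
    have hrevnodup : p.reverse.support.Nodup := by
      rw [Walk.support_reverse, List.nodup_reverse]; exact hp.support_nodup
    have hQpath : Q.IsPath := by
      rw [Walk.isPath_def, hQsup]
      refine List.Nodup.append hAnodup (List.Sublist.nodup (List.tail_sublist _) hrevnodup) ?_
      intro z hz1 hz2
      obtain ⟨t, ht1, ht2, rfl⟩ := hAsup z hz1
      have hzp : c.getVert t ∈ p.support := by
        have h2 := List.tail_subset _ hz2
        rwa [Walk.support_reverse, List.mem_reverse] at h2
      rcases hint _ hzp ⟨t, by omega, rfl⟩ with h1 | h1
      · exact absurd (IsCycle.getVert_inj hc (by omega) hi h1) (by omega)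
      · refine (?_ : c.getVert t ∉ p.reverse.support.tail) hz2
        rw [h1]
        exact (List.nodup_cons.1 (hrevsup ▸ hrevnodup)).1
    have hedge : s(c.getVert i, c.getVert (i+1)) ∉ Q.edges := by
      rw [hQ, Walk.edges_append, List.mem_append]
      rintro (he | he)
      · have hm := Walk.fst_mem_support_of_mem_edges _ he
        obtain ⟨t, ht1, ht2, hteq⟩ := hAsup _ hm
        exact absurd (IsCycle.getVert_inj hc hi (by omega) hteq) (by omega)
      · have hm := Walk.snd_mem_support_of_mem_edges _ he
        rw [Walk.support_reverse, List.mem_reverse] at hm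
        rcases hint _ hm ⟨i+1, by omega, rfl⟩ with h1 | h1
        · exact absurd (IsCycle.getVert_inj hc (by omega) hi h1) (by omega)
        · exact absurd (IsCycle.getVert_inj hc (by omega) hj h1) (by omega)
    have hcyc2 : (Walk.cons (c.adj_getVert_succ hi) Q).IsCycle :=
      (Walk.cons_isCycle_iff _ _).2 ⟨hQpath, hedge⟩
    have hlen := hmin _ _ hcyc2
    rw [Walk.length_cons, hQ, Walk.length_append, Walk.length_copy, arc_length, Walk.length_reverse] at hlen
    simp only [Nat.dist]
    omega

lemma excursion {x : V} {c : G.Walk x x} (hc : c.IsCycle)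
    (hmin : ∀ (a : V) (w : G.Walk a a), w.IsCycle → c.length ≤ w.length)
    {i j : ℕ} (hi : i < c.length) (hj : j < c.length)
    (p : G.Walk (c.getVert i) (c.getVert j)) (hp : p.IsPath)
    (hint : ∀ z ∈ p.support, (∃ t, t < c.length ∧ z = c.getVert t) → z = c.getVert i ∨ z = c.getVert j) :
    min (Nat.dist i j) (c.length - Nat.dist i j) ≤ p.length := by
  rcases le_total i j with hij | hij
  · exact excursion_aux hc hmin hij hi hj p hp hint
  · have := excursion_aux hc hmin hij hj hi p.reverse (hp.reverse) ?_
    · rw [Walk.length_reverse] at this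
      rwa [Nat.dist_comm] at this
    · intro z hz hex
      rw [Walk.support_reverse, List.mem_reverse] at hz
      exact (hint z hz hex).symm


lemma dist_le_arc {x : V} {c : G.Walk x x} {i j : ℕ} (hij : i ≤ j) (hj : j ≤ c.length) :
    G.dist (c.getVert i) (c.getVert j) ≤ min (j - i) (c.length - (j - i)) := by
  refine le_min ?_ ?_
  · have h1 : G.dist (c.getVert i) (c.getVert j) ≤
        ((arc c i (j-i) (by omega)).copy rfl
          (show c.getVert (i+(j-i)) = c.getVert j by congr 1; omega)).length :=
      SimpleGraph.dist_le _
    rwa [Walk.length_copy, arc_length] at h1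
  · have e1 : c.getVert (j + (c.length - j)) = x := by
      rw [show j + (c.length - j) = c.length by omega]; exact c.getVert_length
    have e2 : c.getVert 0 = x := c.getVert_zero
    have e3 : c.getVert (0 + i) = c.getVert i := by congr 1; omega
    have hd : G.dist (c.getVert j) (c.getVert i) ≤
        (((arc c j (c.length - j) (by omega)).copy rfl e1).append
          ((arc c 0 i (by omega)).copy e2 e3)).length := SimpleGraph.dist_le _
    rw [Walk.length_append, Walk.length_copy, Walk.length_copy, arc_length, arc_length] at hd
    rw [SimpleGraph.dist_comm]
    omega

lemma firstHit {x : V} (c : G.Walk x x) :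
    ∀ {z w : V} (p : G.Walk z w), p.IsPath → (∀ t, t < c.length → z ≠ c.getVert t) →
    (∃ s, s < c.length ∧ w = c.getVert s) →
    ∃ k, k < c.length ∧ ∃ (P₁ : G.Walk z (c.getVert k)) (P₂ : G.Walk (c.getVert k) w),
      P₁.length + P₂.length = p.length ∧ 1 ≤ P₁.length ∧ P₁.IsPath ∧ P₂.IsPath ∧
      P₁.support ⊆ p.support ∧
      (∀ y ∈ P₁.support, ∀ t, t < c.length → y = c.getVert t → y = c.getVert k) := by
  intro z w p
  induction p with
  | nil =>
    rintro _ hz ⟨s, hs, rfl⟩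
    exact absurd rfl (hz s hs)
  | @cons z z' w h q ih =>
    rintro hp hz hw
    by_cases hz' : ∃ k, k < c.length ∧ z' = c.getVert k
    · obtain ⟨k, hk, hzk⟩ := hz'
      subst hzk
      refine ⟨k, hk, Walk.cons h Walk.nil, q, ?_, ?_, ?_, ((Walk.cons_isPath_iff h q).1 hp).1, ?_, ?_⟩
      · rw [Walk.length_cons, Walk.length_cons, Walk.length_nil]; omega
      · simp
      · rw [Walk.isPath_def]
        simp [h.ne]
      · intro y hy
        simp only [Walk.support_cons, Walk.support_nil, List.mem_cons, List.mem_singleton,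
          List.not_mem_nil, or_false] at hy
        rcases hy with rfl | rfl
        · exact List.mem_cons_self
        · exact List.mem_cons_of_mem _ (Walk.start_mem_support q)
      · intro y hy t ht hyt
        simp only [Walk.support_cons, Walk.support_nil, List.mem_cons, List.mem_singleton,
          List.not_mem_nil, or_false] at hy
        rcases hy with rfl | rfl
        · exact absurd hyt (hz t ht)
        · rfl
    · push_neg at hz'
      obtain ⟨k, hk, Q₁, Q₂, hQlen, hQ1, hQ1p, hQ2p, hQsub, hQint⟩ :=
        ih ((Walk.cons_isPath_iff h q).1 hp).1 hz' hw
      refine ⟨k, hk, Walk.cons h Q₁, Q₂, ?_, ?_, ?_, hQ2p, ?_, ?_⟩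
      · rw [Walk.length_cons, Walk.length_cons]; omega
      · simp [Walk.length_cons]
      · rw [Walk.cons_isPath_iff]
        exact ⟨hQ1p, fun hmem => ((Walk.cons_isPath_iff h q).1 hp).2 (hQsub hmem)⟩
      · intro y hy
        rw [Walk.support_cons] at hy ⊢
        rcases List.mem_cons.1 hy with rfl | hy
        · exact List.mem_cons_self
        · exact List.mem_cons_of_mem _ (hQsub hy)
      · intro y hy t ht hyt
        rw [Walk.support_cons] at hy
        rcases List.mem_cons.1 hy with rfl | hy
        · exact absurd hyt (hz t ht)
        · exact hQint y hy t ht hyt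

lemma cdist_le_path {x : V} {c : G.Walk x x} (hc : c.IsCycle)
    (hmin : ∀ (a : V) (w : G.Walk a a), w.IsCycle → c.length ≤ w.length) :
    ∀ (n : ℕ) {i j : ℕ}, i < c.length → j < c.length →
    ∀ {u v : V} (p : G.Walk u v), u = c.getVert i → v = c.getVert j → p.IsPath → p.length = n →
    min (Nat.dist i j) (c.length - Nat.dist i j) ≤ n := by
  intro n
  induction n using Nat.strong_induction_on with
  | _ n ihn =>
    intro i j hi hj u v p hu hv hp hn
    by_cases hij : c.getVert i = c.getVert j
    · have : i = j := IsCycle.getVert_inj hc hi hj hij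
      subst this
      simp [Nat.dist_self]
    cases p with
    | nil =>
      exact absurd (hu.symm.trans hv) hij
    | @cons _ z _ h q =>
      have hq : q.IsPath := ((Walk.cons_isPath_iff h q).1 hp).1
      rw [Walk.length_cons] at hn
      by_cases hz : ∃ k, k < c.length ∧ z = c.getVert k
      · obtain ⟨k, hk, hzk⟩ := hz
        subst hzk
        have hchord : min (Nat.dist i k) (c.length - Nat.dist i k) ≤ 1 := by
          have hexc := excursion hc hmin hi hk ((Walk.cons h Walk.nil).copy hu rfl) ?_ ?_
          · simpa using hexc
          · rw [Walk.isPath_copy, Walk.isPath_def]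
            simp [h.ne]
          · intro y hy _
            rw [Walk.support_copy] at hy
            simp only [Walk.support_cons, Walk.support_nil, List.mem_cons, List.mem_singleton,
              List.not_mem_nil, or_false] at hy
            rcases hy with rfl | rfl
            · exact Or.inl hu
            · exact Or.inr rfl
        have h2 : min (Nat.dist k j) (c.length - Nat.dist k j) ≤ q.length :=
          ihn q.length (by omega) hk hj q rfl hv hq rfl
        simp only [Nat.dist] at *
        omega
      · push_neg at hz
        obtain ⟨k, hk, Q₁, Q₂, hQlen, hQ1, hQ1p, hQ2p, hQsub, hQint⟩ :=
          firstHit c q hq hz ⟨j, hj, hv⟩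
        have hE : ((Walk.cons h Q₁).copy hu rfl).IsPath := by
          rw [Walk.isPath_copy, Walk.cons_isPath_iff]
          exact ⟨hQ1p, fun hmem => ((Walk.cons_isPath_iff h q).1 hp).2 (hQsub hmem)⟩
        have hexc : min (Nat.dist i k) (c.length - Nat.dist i k) ≤ 1 + Q₁.length := by
          have hexc0 := excursion hc hmin hi hk ((Walk.cons h Q₁).copy hu rfl) hE ?_
          · rw [Walk.length_copy, Walk.length_cons] at hexc0; omega
          · rintro y hy ⟨t, ht, hyt⟩
            rw [Walk.support_copy, Walk.support_cons] at hy
            rcases List.mem_cons.1 hy with rfl | hy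
            · exact Or.inl hu
            · exact Or.inr (hQint y hy t ht hyt)
        have h2 : min (Nat.dist k j) (c.length - Nat.dist k j) ≤ Q₂.length :=
          ihn Q₂.length (by omega) hk hj Q₂ rfl hv hQ2p rfl
        simp only [Nat.dist] at *
        omega

lemma cyc_dist_eq [DecidableEq V] {x : V} {c : G.Walk x x} (hG : G.Connected) (hc : c.IsCycle)
    (hmin : ∀ (a : V) (w : G.Walk a a), w.IsCycle → c.length ≤ w.length)
    {i j : ℕ} (hi : i < c.length) (hj : j < c.length) :
    G.dist (c.getVert i) (c.getVert j) = min (Nat.dist i j) (c.length - Nat.dist i j) := by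
  refine le_antisymm ?_ ?_
  · rcases le_total i j with hij | hij
    · have h1 := dist_le_arc (G := G) hij (le_of_lt hj)
      rw [Nat.dist_eq_sub_of_le hij]
      exact h1
    · have h1 := dist_le_arc (G := G) hij (le_of_lt hi)
      rw [Nat.dist_comm i j, Nat.dist_eq_sub_of_le hij, SimpleGraph.dist_comm]
      exact h1
  · obtain ⟨p, hplen⟩ := hG.exists_walk_length_eq_dist (c.getVert i) (c.getVert j)
    have h1 := cdist_le_path hc hmin p.bypass.length hi hj p.bypass rfl rfl p.bypass_isPath rfl
    have hb := Walk.length_bypass_le p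
    omega


lemma reach_of_walk {v : V} :
    ∀ {s t : V} (w : G.Walk s t), v ∉ w.support →
    ∀ (hs : s ∈ ({v}ᶜ : Set V)) (ht : t ∈ ({v}ᶜ : Set V)),
    (G.induce ({v}ᶜ : Set V)).Reachable ⟨s, hs⟩ ⟨t, ht⟩ := by
  intro s t w
  induction w with
  | nil => intro _ hs ht; exact Reachable.refl _
  | @cons s b t h q ih =>
    intro hv hs ht
    rw [Walk.support_cons, List.mem_cons] at hv
    push_neg at hv
    have hb : b ∈ ({v}ᶜ : Set V) := by
      simp only [Set.mem_compl_iff, Set.mem_singleton_iff]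
      intro hbv
      exact hv.2 (hbv ▸ q.start_mem_support)
    have hadj : (G.induce ({v}ᶜ : Set V)).Adj ⟨s, hs⟩ ⟨b, hb⟩ := by
      simp only [comap_adj, Function.Embedding.coe_subtype] at *
      exact h
    exact hadj.reachable.trans (ih hv.2 hb ht)

lemma pass_through {v s t : V} (hs : s ∈ ({v}ᶜ : Set V)) (ht : t ∈ ({v}ᶜ : Set V))
    (hnr : ¬ (G.induce ({v}ᶜ : Set V)).Reachable ⟨s, hs⟩ ⟨t, ht⟩) (w : G.Walk s t) :
    v ∈ w.support := by
  by_contra hv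
  exact hnr (reach_of_walk w hv hs ht)

lemma dist_split [DecidableEq V] (hG : G.Connected) {v s t : V}
    (hpass : ∀ w : G.Walk s t, v ∈ w.support) :
    G.dist s t = G.dist s v + G.dist v t := by
  refine le_antisymm (hG.dist_triangle) ?_
  obtain ⟨p, hplen⟩ := hG.exists_walk_length_eq_dist s t
  have hv := hpass p
  have hsplit : (p.takeUntil v hv).length + (p.dropUntil v hv).length = p.length := by
    have := congrArg Walk.length (p.take_spec hv)
    rwa [Walk.length_append] at this
  have h1 := SimpleGraph.dist_le (p.takeUntil v hv)
  have h2 := SimpleGraph.dist_le (p.dropUntil v hv)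
  omega


lemma exists_far_neighbor [DecidableEq V] (hG : G.Connected) {v z₀ : V}
    (hz : z₀ ∈ ({v}ᶜ : Set V)) (hdisc : ¬ (G.induce ({v}ᶜ : Set V)).Connected) :
    ∃ q, G.Adj v q ∧ ∃ (hq : q ∈ ({v}ᶜ : Set V)),
      ¬ (G.induce ({v}ᶜ : Set V)).Reachable ⟨z₀, hz⟩ ⟨q, hq⟩ := by
  have hnp : ¬ (G.induce ({v}ᶜ : Set V)).Preconnected := by
    intro hp
    haveI : Nonempty ({v}ᶜ : Set V) := ⟨⟨z₀, hz⟩⟩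
    exact hdisc ⟨hp⟩
  have hy : ∃ y : ({v}ᶜ : Set V), ¬ (G.induce ({v}ᶜ : Set V)).Reachable ⟨z₀, hz⟩ y := by
    by_contra hall
    push_neg at hall
    exact hnp fun s t => ((hall s).symm.trans (hall t))
  obtain ⟨⟨y, hymem⟩, hynr⟩ := hy
  obtain ⟨w0⟩ := hG v y
  have hpp := w0.bypass_isPath
  revert hpp
  generalize w0.bypass = p
  intro hpp
  cases p with
  | nil => simp at hymem
  | @cons _ z _ h q2 =>
    have hq2 : q2.IsPath := ((Walk.cons_isPath_iff h q2).1 hpp).1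
    have hvq2 : v ∉ q2.support := ((Walk.cons_isPath_iff h q2).1 hpp).2
    have hzv : z ≠ v := fun heq => hvq2 (heq ▸ q2.start_mem_support)
    have hzmem : z ∈ ({v}ᶜ : Set V) := by simp [hzv]
    have hreach := reach_of_walk q2 hvq2 hzmem hymem
    exact ⟨z, h, hzmem, fun hr => hynr (hr.trans hreach)⟩

lemma main_cut_on [Fintype V] [DecidableEq V] {G : SimpleGraph V} (hG : G.Connected)
    {x : V} {c : G.Walk x x} (hc : c.IsCycle)
    (hmin : ∀ (a : V) (w : G.Walk a a), w.IsCycle → c.length ≤ w.length)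
    {v : V} (hv : v = c.getVert 0)
    (hdisc : ¬ (G.induce ({v}ᶜ : Set V)).Connected) :
    ∃ (W : Finset V), Resolves G ↑W ∧ W.card + c.length ≤ Fintype.card V + 1 := by
  set L := c.length with hLdef
  have hL3 : 3 ≤ L := hc.three_le_length
  have gvi : ∀ {i j : ℕ}, i < L → j < L → c.getVert i = c.getVert j → i = j :=
    fun hi hj heq => IsCycle.getVert_inj hc hi hj heq
  set hh := L / 2 with hhdef
  have hh1 : 1 ≤ hh := by omega
  have hh2 : hh + 1 < L := by omega
  have gvne : ∀ i, 1 ≤ i → i < L → c.getVert i ≠ v := by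
    intro i h1 h2 heq
    rw [hv] at heq
    have := gvi h2 (by omega) heq
    omega
  have hmem : ∀ {z : V}, z ≠ v → z ∈ ({v}ᶜ : Set V) := fun h => by simp [h]
  have reachArc : ∀ (i j : ℕ) (hi : c.getVert i ∈ ({v}ᶜ : Set V))
      (hj2 : c.getVert j ∈ ({v}ᶜ : Set V)), 1 ≤ i → i ≤ j → j < L →
      (G.induce ({v}ᶜ : Set V)).Reachable ⟨c.getVert i, hi⟩ ⟨c.getVert j, hj2⟩ := by
    intro i j hi hj2 h1 hij hj
    refine reach_of_walk ((arc c i (j - i) (by omega)).copy rfl (by congr 1; omega)) ?_ _ _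
    rw [Walk.support_copy, arc_support]
    intro hvmem
    obtain ⟨t, ht, hteq⟩ := List.mem_map.1 hvmem
    rw [List.mem_range] at ht
    exact gvne (i + t) (by omega) (by omega) hteq
  have reach2 : ∀ (i j : ℕ) (hi : c.getVert i ∈ ({v}ᶜ : Set V))
      (hj2 : c.getVert j ∈ ({v}ᶜ : Set V)), 1 ≤ i → i < L → 1 ≤ j → j < L →
      (G.induce ({v}ᶜ : Set V)).Reachable ⟨c.getVert i, hi⟩ ⟨c.getVert j, hj2⟩ := by
    intro i j hi hj2 hi1 hi2 hj1 hj22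
    rcases le_total i j with hij | hij
    · exact reachArc i j hi hj2 hi1 hij hj22
    · exact (reachArc j i hj2 hi hj1 hij hi2).symm
  obtain ⟨q, hqadj, hqmem, hqnr⟩ :=
    exists_far_neighbor hG (hmem (gvne 1 le_rfl (by omega))) hdisc
  have hqv : q ≠ v := by simpa using hqmem
  have hqsep : ∀ (i : ℕ) (hi : c.getVert i ∈ ({v}ᶜ : Set V)), 1 ≤ i → i < L →
      ¬ (G.induce ({v}ᶜ : Set V)).Reachable ⟨q, hqmem⟩ ⟨c.getVert i, hi⟩ := by
    intro i hi h1 h2 hr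
    exact hqnr ((reach2 1 i (hmem (gvne 1 le_rfl (by omega))) hi le_rfl (by omega) h1 h2).trans hr.symm)
  have hqdist : ∀ i, 1 ≤ i → i < L →
      G.dist q (c.getVert i) = 1 + G.dist v (c.getVert i) := by
    intro i h1 h2
    have hpass : ∀ w : G.Walk q (c.getVert i), v ∈ w.support :=
      pass_through hqmem (hmem (gvne i h1 h2)) (hqsep i (hmem (gvne i h1 h2)) h1 h2)
    rw [dist_split hG hpass]
    have hqv1 : G.dist q v = 1 := by
      rw [SimpleGraph.dist_comm]
      exact (SimpleGraph.dist_eq_one_iff_adj).2 hqadj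
    omega
  have hcyc : ∀ i j, i < L → j < L →
      G.dist (c.getVert i) (c.getVert j) = min (Nat.dist i j) (L - Nat.dist i j) :=
    fun i j hi hj => cyc_dist_eq hG hc hmin hi hj
  have hqa : G.dist q (c.getVert hh) = 1 + hh := by
    rw [hqdist hh hh1 (by omega), hv, hcyc 0 hh (by omega) (by omega)]
    have : Nat.dist 0 hh = hh := by simp [Nat.dist]
    rw [this]
    have : min hh (L - hh) = hh := by omega
    rw [this]
  set CF : Finset V := (Finset.range L).image (fun t => c.getVert t) with hCF
  have hCFcard : CF.card = L := by
    rw [hCF, Finset.card_image_of_injOn, Finset.card_range]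
    intro i hi j hj hij
    exact gvi (Finset.mem_range.1 hi) (Finset.mem_range.1 hj) hij
  have hCFmem : ∀ {z : V}, z ∈ CF ↔ ∃ t, t < L ∧ c.getVert t = z := by
    intro z
    simp [hCF, Finset.mem_image, Finset.mem_range]
  have hqCF : q ∉ CF := by
    intro hmemCF
    obtain ⟨t, ht, hteq⟩ := hCFmem.1 hmemCF
    subst hteq
    rcases Nat.eq_zero_or_pos t with rfl | hpos
    · exact hqv (by rw [hv])
    · exact hqsep t (hmem (gvne t hpos ht)) hpos ht (Reachable.refl _)
  have haCF : c.getVert hh ∈ CF := hCFmem.2 ⟨hh, by omega, rfl⟩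
  have hbCF : c.getVert (hh+1) ∈ CF := hCFmem.2 ⟨hh+1, by omega, rfl⟩
  have hab : c.getVert hh ≠ c.getVert (hh+1) := by
    intro heq
    have := gvi (by omega) (by omega) heq
    omega
  set S : Finset V := (CF \ {c.getVert hh, c.getVert (hh+1)}) ∪ {q} with hS
  have hSsub : ({c.getVert hh, c.getVert (hh+1)} : Finset V) ⊆ CF := by
    intro z hz
    rcases Finset.mem_insert.1 hz with rfl | hz
    · exact haCF
    · rw [Finset.mem_singleton] at hz
      subst hz
      exact hbCF
  have hScard : S.card = L - 1 := by
    rw [hS, Finset.card_union_of_disjoint, Finset.card_sdiff_of_subset hSsub, hCFcard,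
      Finset.card_singleton]
    · rw [Finset.card_insert_of_notMem (by simpa using hab), Finset.card_singleton]
      omega
    · rw [Finset.disjoint_singleton_right]
      intro hqmem2
      exact hqCF (Finset.mem_sdiff.1 hqmem2).1
  have haS : c.getVert hh ∉ S := by
    rw [hS]
    intro hmem2
    rcases Finset.mem_union.1 hmem2 with hmem2 | hmem2
    · exact (Finset.mem_sdiff.1 hmem2).2 (by simp)
    · rw [Finset.mem_singleton] at hmem2
      exact hqCF (hmem2 ▸ haCF)
  have hbS : c.getVert (hh+1) ∉ S := by
    rw [hS]
    intro hmem2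
    rcases Finset.mem_union.1 hmem2 with hmem2 | hmem2
    · exact (Finset.mem_sdiff.1 hmem2).2 (by simp)
    · rw [Finset.mem_singleton] at hmem2
      exact hqCF (hmem2 ▸ hbCF)
  refine ⟨Sᶜ, ?_, ?_⟩
  · intro u1 u2 hne12
    by_cases h1 : u1 ∈ Sᶜ
    · refine ⟨u1, Finset.mem_coe.2 h1, ?_⟩
      have := hG.pos_dist_of_ne (Ne.symm hne12)
      rw [SimpleGraph.dist_self]
      omega
    by_cases h2 : u2 ∈ Sᶜ
    · refine ⟨u2, Finset.mem_coe.2 h2, ?_⟩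
      have := hG.pos_dist_of_ne hne12
      rw [SimpleGraph.dist_self]
      omega
    rw [Finset.mem_compl, not_not] at h1 h2
    have hdecomp : ∀ {u : V}, u ∈ S → (∃ i, i < L ∧ c.getVert i = u ∧
        c.getVert i ≠ c.getVert hh ∧ c.getVert i ≠ c.getVert (hh+1)) ∨ u = q := by
      intro u hu
      rcases Finset.mem_union.1 (hS ▸ hu) with hu2 | hu2
      · obtain ⟨hin, hnot⟩ := Finset.mem_sdiff.1 hu2
        obtain ⟨t, ht, hteq⟩ := hCFmem.1 hin
        simp only [Finset.mem_insert, Finset.mem_singleton] at hnot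
        push_neg at hnot
        exact Or.inl ⟨t, ht, hteq, by rw [hteq]; exact hnot.1, by rw [hteq]; exact hnot.2⟩
      · exact Or.inr (Finset.mem_singleton.1 hu2)
    have hcross : ∀ i, i < L → ∃ w ∈ (↑(Sᶜ) : Set V),
        G.dist (c.getVert i) w ≠ G.dist q w := by
      intro i hi
      refine ⟨c.getVert hh, Finset.mem_coe.2 (Finset.mem_compl.2 haS), ?_⟩
      rw [hqa, hcyc i hh hi (by omega)]
      have : min (Nat.dist i hh) (L - Nat.dist i hh) ≤ hh := by
        simp only [Nat.dist]
        omega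
      omega
    rcases hdecomp h1 with ⟨i, hi, hieq, _, _⟩ | rfl
    · rcases hdecomp h2 with ⟨j, hj, hjeq, _, _⟩ | rfl
      · subst hieq
        subst hjeq
        by_contra hno
        push_neg at hno
        have e1 := hno (c.getVert hh) (Finset.mem_coe.2 (Finset.mem_compl.2 haS))
        have e2 := hno (c.getVert (hh+1)) (Finset.mem_coe.2 (Finset.mem_compl.2 hbS))
        rw [hcyc i hh hi (by omega), hcyc j hh hj (by omega)] at e1
        rw [hcyc i (hh+1) hi (by omega), hcyc j (hh+1) hj (by omega)] at e2
        have hijeq : i = j := by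
          simp only [Nat.dist] at e1 e2
          omega
        exact hne12 (by rw [hijeq])
      · subst hieq
        exact hcross i hi
    · rcases hdecomp h2 with ⟨j, hj, hjeq, _, _⟩ | rfl
      · subst hjeq
        obtain ⟨w, hw, hd⟩ := hcross j hj
        exact ⟨w, hw, hd.symm⟩
      · exact absurd rfl hne12
  · rw [Finset.card_compl, hScard]
    have hle := Finset.card_le_univ CF
    rw [hCFcard] at hle
    omega


lemma main_cut_off [Fintype V] [DecidableEq V] {G : SimpleGraph V} (hG : G.Connected)
    {x : V} {c : G.Walk x x} (hc : c.IsCycle)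
    (hmin : ∀ (a : V) (w : G.Walk a a), w.IsCycle → c.length ≤ w.length)
    {v : V} (hv : v ∉ c.support)
    (hdisc : ¬ (G.induce ({v}ᶜ : Set V)).Connected) :
    ∃ (W : Finset V), Resolves G ↑W ∧ W.card + c.length ≤ Fintype.card V + 1 := by
  set L := c.length with hLdef
  have hL3 : 3 ≤ L := hc.three_le_length
  have gvi : ∀ {i j : ℕ}, i < L → j < L → c.getVert i = c.getVert j → i = j :=
    fun hi hj heq => IsCycle.getVert_inj hc hi hj heq
  set hh := L / 2 with hhdef
  have hh1 : 1 ≤ hh := by omega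
  have hh2 : hh + 1 < L := by omega
  have gvne : ∀ i, i ≤ L → c.getVert i ≠ v := by
    intro i hi heq
    exact hv (heq ▸ getVert_mem_support c hi)
  have hmem : ∀ {z : V}, z ≠ v → z ∈ ({v}ᶜ : Set V) := fun h => by simp [h]
  have reachArc : ∀ (i j : ℕ) (hi : c.getVert i ∈ ({v}ᶜ : Set V))
      (hj2 : c.getVert j ∈ ({v}ᶜ : Set V)), i ≤ j → j < L →
      (G.induce ({v}ᶜ : Set V)).Reachable ⟨c.getVert i, hi⟩ ⟨c.getVert j, hj2⟩ := by
    intro i j hi hj2 hij hj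
    refine reach_of_walk ((arc c i (j - i) (by omega)).copy rfl (by congr 1; omega)) ?_ _ _
    rw [Walk.support_copy, arc_support]
    intro hvmem
    obtain ⟨t, ht, hteq⟩ := List.mem_map.1 hvmem
    rw [List.mem_range] at ht
    exact gvne (i + t) (by omega) hteq
  have reach2 : ∀ (i j : ℕ) (hi : c.getVert i ∈ ({v}ᶜ : Set V))
      (hj2 : c.getVert j ∈ ({v}ᶜ : Set V)), i < L → j < L →
      (G.induce ({v}ᶜ : Set V)).Reachable ⟨c.getVert i, hi⟩ ⟨c.getVert j, hj2⟩ := by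
    intro i j hi hj2 hi2 hj22
    rcases le_total i j with hij | hij
    · exact reachArc i j hi hj2 hij hj22
    · exact (reachArc j i hj2 hi hij hi2).symm
  obtain ⟨q, hqadj, hqmem, hqnr⟩ :=
    exists_far_neighbor hG (hmem (gvne 0 (by omega))) hdisc
  have hqv : q ≠ v := by simpa using hqmem
  have hqsep : ∀ (i : ℕ) (hi : c.getVert i ∈ ({v}ᶜ : Set V)), i < L →
      ¬ (G.induce ({v}ᶜ : Set V)).Reachable ⟨q, hqmem⟩ ⟨c.getVert i, hi⟩ := by
    intro i hi h2 hr
    exact hqnr ((reach2 0 i (hmem (gvne 0 (by omega))) hi (by omega) h2).trans hr.symm)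
  have hvq1 : G.dist v q = 1 := (SimpleGraph.dist_eq_one_iff_adj).2 hqadj
  have hqdist : ∀ i, i < L →
      G.dist (c.getVert i) q = G.dist (c.getVert i) v + 1 := by
    intro i h2
    have hpass : ∀ w : G.Walk (c.getVert i) q, v ∈ w.support :=
      pass_through (hmem (gvne i (by omega))) hqmem
        (fun hr => hqsep i (hmem (gvne i (by omega))) h2 hr.symm)
    rw [dist_split hG hpass, hvq1]
  have hcyc : ∀ i j, i < L → j < L →
      G.dist (c.getVert i) (c.getVert j) = min (Nat.dist i j) (L - Nat.dist i j) :=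
    fun i j hi hj => cyc_dist_eq hG hc hmin hi hj
  set CF : Finset V := (Finset.range L).image (fun t => c.getVert t) with hCF
  have hCFcard : CF.card = L := by
    rw [hCF, Finset.card_image_of_injOn, Finset.card_range]
    intro i hi j hj hij
    exact gvi (Finset.mem_range.1 hi) (Finset.mem_range.1 hj) hij
  have hCFmem : ∀ {z : V}, z ∈ CF ↔ ∃ t, t < L ∧ c.getVert t = z := by
    intro z
    simp [hCF, Finset.mem_image, Finset.mem_range]
  have hvCF : v ∉ CF := by
    intro hmemCF
    obtain ⟨t, ht, hteq⟩ := hCFmem.1 hmemCF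
    exact gvne t (by omega) hteq
  have hqCF : q ∉ CF := by
    intro hmemCF
    obtain ⟨t, ht, hteq⟩ := hCFmem.1 hmemCF
    subst hteq
    exact hqsep t hqmem ht (Reachable.refl _)
  have haCF : c.getVert hh ∈ CF := hCFmem.2 ⟨hh, by omega, rfl⟩
  have hbCF : c.getVert (hh+1) ∈ CF := hCFmem.2 ⟨hh+1, by omega, rfl⟩
  have hab : c.getVert hh ≠ c.getVert (hh+1) := by
    intro heq
    have := gvi (by omega) (by omega) heq
    omega
  set S : Finset V := (CF \ {c.getVert hh, c.getVert (hh+1)}) ∪ {v} with hS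
  have hSsub : ({c.getVert hh, c.getVert (hh+1)} : Finset V) ⊆ CF := by
    intro z hz
    rcases Finset.mem_insert.1 hz with rfl | hz
    · exact haCF
    · rw [Finset.mem_singleton] at hz
      subst hz
      exact hbCF
  have hScard : S.card = L - 1 := by
    rw [hS, Finset.card_union_of_disjoint, Finset.card_sdiff_of_subset hSsub, hCFcard,
      Finset.card_singleton]
    · rw [Finset.card_insert_of_notMem (by simpa using hab), Finset.card_singleton]
      omega
    · rw [Finset.disjoint_singleton_right]
      intro hvmem2
      exact hvCF (Finset.mem_sdiff.1 hvmem2).1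
  have haS : c.getVert hh ∉ S := by
    rw [hS]
    intro hmem2
    rcases Finset.mem_union.1 hmem2 with hmem2 | hmem2
    · exact (Finset.mem_sdiff.1 hmem2).2 (by simp)
    · rw [Finset.mem_singleton] at hmem2
      exact gvne hh (by omega) hmem2
  have hbS : c.getVert (hh+1) ∉ S := by
    rw [hS]
    intro hmem2
    rcases Finset.mem_union.1 hmem2 with hmem2 | hmem2
    · exact (Finset.mem_sdiff.1 hmem2).2 (by simp)
    · rw [Finset.mem_singleton] at hmem2
      exact gvne (hh+1) (by omega) hmem2
  have hqS : q ∉ S := by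
    rw [hS]
    intro hmem2
    rcases Finset.mem_union.1 hmem2 with hmem2 | hmem2
    · exact hqCF (Finset.mem_sdiff.1 hmem2).1
    · rw [Finset.mem_singleton] at hmem2
      exact hqv hmem2
  refine ⟨Sᶜ, ?_, ?_⟩
  · intro u1 u2 hne12
    by_cases h1 : u1 ∈ Sᶜ
    · refine ⟨u1, Finset.mem_coe.2 h1, ?_⟩
      have := hG.pos_dist_of_ne (Ne.symm hne12)
      rw [SimpleGraph.dist_self]
      omega
    by_cases h2 : u2 ∈ Sᶜ
    · refine ⟨u2, Finset.mem_coe.2 h2, ?_⟩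
      have := hG.pos_dist_of_ne hne12
      rw [SimpleGraph.dist_self]
      omega
    rw [Finset.mem_compl, not_not] at h1 h2
    have hdecomp : ∀ {u : V}, u ∈ S → (∃ i, i < L ∧ c.getVert i = u ∧
        c.getVert i ≠ c.getVert hh ∧ c.getVert i ≠ c.getVert (hh+1)) ∨ u = v := by
      intro u hu
      rcases Finset.mem_union.1 (hS ▸ hu) with hu2 | hu2
      · obtain ⟨hin, hnot⟩ := Finset.mem_sdiff.1 hu2
        obtain ⟨t, ht, hteq⟩ := hCFmem.1 hin
        simp only [Finset.mem_insert, Finset.mem_singleton] at hnot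
        push_neg at hnot
        exact Or.inl ⟨t, ht, hteq, by rw [hteq]; exact hnot.1, by rw [hteq]; exact hnot.2⟩
      · exact Or.inr (Finset.mem_singleton.1 hu2)
    have hcross : ∀ i, i < L → ∃ w ∈ (↑(Sᶜ) : Set V),
        G.dist (c.getVert i) w ≠ G.dist v w := by
      intro i hi
      refine ⟨q, Finset.mem_coe.2 (Finset.mem_compl.2 hqS), ?_⟩
      rw [hqdist i hi, hvq1]
      have := hG.pos_dist_of_ne (gvne i (by omega))
      omega
    rcases hdecomp h1 with ⟨i, hi, hieq, _, _⟩ | rfl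
    · rcases hdecomp h2 with ⟨j, hj, hjeq, _, _⟩ | rfl
      · subst hieq
        subst hjeq
        by_contra hno
        push_neg at hno
        have e1 := hno (c.getVert hh) (Finset.mem_coe.2 (Finset.mem_compl.2 haS))
        have e2 := hno (c.getVert (hh+1)) (Finset.mem_coe.2 (Finset.mem_compl.2 hbS))
        rw [hcyc i hh hi (by omega), hcyc j hh hj (by omega)] at e1
        rw [hcyc i (hh+1) hi (by omega), hcyc j (hh+1) hj (by omega)] at e2
        have hijeq : i = j := by
          simp only [Nat.dist] at e1 e2
          omega
        exact hne12 (by rw [hijeq])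
      · subst hieq
        exact hcross i hi
    · rcases hdecomp h2 with ⟨j, hj, hjeq, _, _⟩ | rfl
      · subst hjeq
        obtain ⟨w, hw, hd⟩ := hcross j hj
        exact ⟨w, hw, hd.symm⟩
      · exact absurd rfl hne12
  · rw [Finset.card_compl, hScard]
    have hle := Finset.card_le_univ CF
    rw [hCFcard] at hle
    omega

end MetDimAux

open MetDimAux

theorem stmt6 {V : Type*} [Fintype V] (G : SimpleGraph V) (hG : G.Connected)
    (hc : ¬ G.IsAcyclic) (h : metricDim G = Fintype.card V - G.girth + 2) :
    3 ≤ Fintype.card V ∧ ∀ v : V, (G.induce ({v}ᶜ : Set V)).Connected := by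
  classical
  obtain ⟨x, c, hcyc, hglen⟩ := (SimpleGraph.exists_girth_eq_length).2 hc
  have hmin : ∀ (a : V) (w : G.Walk a a), w.IsCycle → c.length ≤ w.length := by
    intro a w hw
    have h1 : G.egirth ≤ (w.length : ℕ∞) := by
      rw [SimpleGraph.egirth]
      exact le_trans (iInf_le _ a) (le_trans (iInf_le _ w) (iInf_le _ hw))
    have h2 : G.girth ≤ w.length := by
      have := ENat.toNat_le_toNat h1 (by simp)
      exact this
    rw [hglen] at h2
    exact h2
  have hL3 : 3 ≤ c.length := hcyc.three_le_length
  have hcard : c.length ≤ Fintype.card V := by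
    have himg : ((Finset.range c.length).image c.getVert).card = c.length := by
      rw [Finset.card_image_of_injOn, Finset.card_range]
      intro i hi j hj hij
      exact IsCycle.getVert_inj hcyc (Finset.mem_range.1 hi) (Finset.mem_range.1 hj) hij
    have := Finset.card_le_univ ((Finset.range c.length).image c.getVert)
    rw [himg] at this
    exact this
  refine ⟨le_trans hL3 hcard, ?_⟩
  intro v
  by_contra hdisc
  obtain ⟨W, hres, hWcard⟩ : ∃ W : Finset V,
      Resolves G ↑W ∧ W.card + c.length ≤ Fintype.card V + 1 := by
    by_cases hvs : v ∈ c.support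
    · have hcyc' : (c.rotate v hvs).IsCycle := hcyc.rotate hvs
      have hlen' : (c.rotate v hvs).length = c.length := by
        exact Walk.length_rotate c v hvs
      have hmin' : ∀ (a : V) (w : G.Walk a a), w.IsCycle → (c.rotate v hvs).length ≤ w.length := by
        rw [hlen']; exact hmin
      have hv0 : v = (c.rotate v hvs).getVert 0 := ((c.rotate v hvs).getVert_zero).symm
      obtain ⟨W, h1, h2⟩ := main_cut_on hG hcyc' hmin' hv0 hdisc
      rw [hlen'] at h2
      exact ⟨W, h1, h2⟩
    · exact main_cut_off hG hcyc hmin hvs hdisc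
  have hdim : metricDim G ≤ W.card := Nat.sInf_le ⟨W, rfl, hres⟩
  rw [hglen] at h
  omega
end

section
/- For the complete bipartite graph K_{r,s} with r,s ≥ 2, the metric dimension is r + s - 2. -/
open SimpleGraph

section Aux

variable {r s : ℕ}

local notation "G" => completeBipartiteGraph (Fin r) (Fin s)

lemma adj_lr (a : Fin r) (b : Fin s) : (G).Adj (Sum.inl a) (Sum.inr b) := by simp

lemma dist_lr (a : Fin r) (b : Fin s) : (G).dist (Sum.inl a) (Sum.inr b) = 1 :=
  SimpleGraph.dist_eq_one_iff_adj.mpr (adj_lr a b)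

lemma dist_rl (b : Fin s) (a : Fin r) : (G).dist (Sum.inr b) (Sum.inl a) = 1 :=
  SimpleGraph.dist_eq_one_iff_adj.mpr (adj_lr a b).symm

lemma dist_ll (hs : 1 ≤ s) {a a' : Fin r} (h : a ≠ a') :
    (G).dist (Sum.inl a) (Sum.inl a') = 2 := by
  have b : Fin s := ⟨0, hs⟩
  have hne : Sum.inl a ≠ (Sum.inl a' : Fin r ⊕ Fin s) := by simpa using h
  let p : (G).Walk (Sum.inl a) (Sum.inl a') :=
    SimpleGraph.Walk.cons (adj_lr a b)
      (SimpleGraph.Walk.cons ((adj_lr a' b).symm) SimpleGraph.Walk.nil)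
  have hle : (G).dist (Sum.inl a) (Sum.inl a') ≤ 2 := by
    simpa [p] using SimpleGraph.dist_le p
  have hpos : 0 < (G).dist (Sum.inl a) (Sum.inl a') :=
    SimpleGraph.Reachable.pos_dist_of_ne ⟨p⟩ hne
  have h1 : (G).dist (Sum.inl a) (Sum.inl a') ≠ 1 := by
    rw [Ne, SimpleGraph.dist_eq_one_iff_adj]; simp
  omega

lemma dist_rr (hr : 1 ≤ r) {b b' : Fin s} (h : b ≠ b') :
    (G).dist (Sum.inr b) (Sum.inr b') = 2 := by
  have a : Fin r := ⟨0, hr⟩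
  have hne : Sum.inr b ≠ (Sum.inr b' : Fin r ⊕ Fin s) := by simpa using h
  let p : (G).Walk (Sum.inr b) (Sum.inr b') :=
    SimpleGraph.Walk.cons ((adj_lr a b).symm)
      (SimpleGraph.Walk.cons (adj_lr a b') SimpleGraph.Walk.nil)
  have hle : (G).dist (Sum.inr b) (Sum.inr b') ≤ 2 := by
    simpa [p] using SimpleGraph.dist_le p
  have hpos : 0 < (G).dist (Sum.inr b) (Sum.inr b') :=
    SimpleGraph.Reachable.pos_dist_of_ne ⟨p⟩ hne
  have h1 : (G).dist (Sum.inr b) (Sum.inr b') ≠ 1 := by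
    rw [Ne, SimpleGraph.dist_eq_one_iff_adj]; simp
  omega

lemma key (hr : 2 ≤ r) (hs : 2 ≤ s) :
    metricDim (completeBipartiteGraph (Fin r) (Fin s)) = r + s - 2 := by
  have hs1 : 1 ≤ s := by omega
  have hr1 : 1 ≤ r := by omega
  set a0 : Fin r := ⟨0, by omega⟩ with ha0
  set a1 : Fin r := ⟨1, by omega⟩ with ha1
  set b0 : Fin s := ⟨0, by omega⟩ with hb0
  have ha10 : a1 ≠ a0 := by simp [ha0, ha1, Fin.ext_iff]
  -- the witness resolving set
  set W : Finset (Fin r ⊕ Fin s) :=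
    ((Finset.univ.filter (· ≠ a0)).image Sum.inl) ∪
    ((Finset.univ.filter (· ≠ b0)).image Sum.inr) with hW
  have hWcard : W.card = r + s - 2 := by
    rw [hW, Finset.card_union_of_disjoint, Finset.card_image_of_injective _ Sum.inl_injective,
      Finset.card_image_of_injective _ Sum.inr_injective]
    · rw [Finset.filter_ne', Finset.filter_ne', Finset.card_erase_of_mem (by simp),
        Finset.card_erase_of_mem (by simp)]
      simp; omega
    · simp [Finset.disjoint_left]
  have hWres : Resolves G ↑W := by
    intro u v huv
    match u, v with
    | Sum.inl a, Sum.inl a' =>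
      have haa : a ≠ a' := by simpa using huv
      rcases eq_or_ne a a0 with h0 | h0
      · refine ⟨Sum.inl a', ?_, ?_⟩
        · have : a' ≠ a0 := fun h => haa (h0.trans h.symm)
          simp [hW, this]
        · rw [SimpleGraph.dist_self, dist_ll hs1 haa]; omega
      · exact ⟨Sum.inl a, by simp [hW, h0], by
          rw [SimpleGraph.dist_self, dist_ll hs1 haa.symm]; omega⟩
    | Sum.inr b, Sum.inr b' =>
      have hbb : b ≠ b' := by simpa using huv
      rcases eq_or_ne b b0 with h0 | h0
      · refine ⟨Sum.inr b', ?_, ?_⟩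
        · have : b' ≠ b0 := fun h => hbb (h0.trans h.symm)
          simp [hW, this]
        · rw [SimpleGraph.dist_self, dist_rr hr1 hbb]; omega
      · exact ⟨Sum.inr b, by simp [hW, h0], by
          rw [SimpleGraph.dist_self, dist_rr hr1 hbb.symm]; omega⟩
    | Sum.inl a, Sum.inr b =>
      rcases eq_or_ne a a0 with h0 | h0
      · refine ⟨Sum.inl a1, by simp [hW, ha10], ?_⟩
        rw [dist_ll hs1 (show a ≠ a1 from fun h => ha10 (h ▸ h0.symm ▸ rfl)), dist_rl]
        omega
      · exact ⟨Sum.inl a, by simp [hW, h0], by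
          rw [SimpleGraph.dist_self, dist_rl]; omega⟩
    | Sum.inr b, Sum.inl a =>
      rcases eq_or_ne a a0 with h0 | h0
      · refine ⟨Sum.inl a1, by simp [hW, ha10], ?_⟩
        rw [dist_ll hs1 (show a ≠ a1 from fun h => ha10 (h ▸ h0.symm ▸ rfl)), dist_rl]
        omega
      · exact ⟨Sum.inl a, by simp [hW, h0], by
          rw [SimpleGraph.dist_self, dist_rl]; omega⟩
  -- lower bound
  have hlb : ∀ T : Finset (Fin r ⊕ Fin s), Resolves G ↑T → r + s - 2 ≤ T.card := by
    intro T hT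
    set A : Finset (Fin r) := Finset.univ.filter (fun a => Sum.inl a ∈ T) with hA
    set B : Finset (Fin s) := Finset.univ.filter (fun b => Sum.inr b ∈ T) with hB
    have hAcard : r - 1 ≤ A.card := by
      by_contra h
      have hAc : 2 ≤ Aᶜ.card := by
        have := Finset.card_compl A
        simp only [Fintype.card_fin] at this
        omega
      obtain ⟨a, ha, a', ha', haa⟩ := Finset.one_lt_card.mp hAc
      have ha : Sum.inl a ∉ T := by simpa [hA] using ha
      have ha' : Sum.inl a' ∉ T := by simpa [hA] using ha'
      obtain ⟨w, hw, hdw⟩ := hT (Sum.inl a) (Sum.inl a') (by simpa using haa)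
      match w with
      | Sum.inl c =>
        have hca : a ≠ c := fun h => ha (h ▸ hw)
        have hca' : a' ≠ c := fun h => ha' (h ▸ hw)
        rw [dist_ll hs1 hca, dist_ll hs1 hca'] at hdw
        exact hdw rfl
      | Sum.inr b => rw [dist_lr, dist_lr] at hdw; exact hdw rfl
    have hBcard : s - 1 ≤ B.card := by
      by_contra h
      have hBc : 2 ≤ Bᶜ.card := by
        have := Finset.card_compl B
        simp only [Fintype.card_fin] at this
        omega
      obtain ⟨b, hb, b', hb', hbb⟩ := Finset.one_lt_card.mp hBc
      have hb : Sum.inr b ∉ T := by simpa [hB] using hb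
      have hb' : Sum.inr b' ∉ T := by simpa [hB] using hb'
      obtain ⟨w, hw, hdw⟩ := hT (Sum.inr b) (Sum.inr b') (by simpa using hbb)
      match w with
      | Sum.inr c =>
        have hcb : b ≠ c := fun h => hb (h ▸ hw)
        have hcb' : b' ≠ c := fun h => hb' (h ▸ hw)
        rw [dist_rr hr1 hcb, dist_rr hr1 hcb'] at hdw
        exact hdw rfl
      | Sum.inl a => rw [dist_rl, dist_rl] at hdw; exact hdw rfl
    have hsub : (A.image Sum.inl) ∪ (B.image Sum.inr) ⊆ T := by
      intro x hx
      simp only [Finset.mem_union, Finset.mem_image] at hx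
      rcases hx with ⟨a, ha, rfl⟩ | ⟨b, hb, rfl⟩
      · simpa [hA] using ha
      · simpa [hB] using hb
    have hcard : A.card + B.card ≤ T.card := by
      calc A.card + B.card
          = ((A.image Sum.inl) ∪ (B.image Sum.inr)).card := by
            rw [Finset.card_union_of_disjoint (by simp [Finset.disjoint_left]),
              Finset.card_image_of_injective _ Sum.inl_injective,
              Finset.card_image_of_injective _ Sum.inr_injective]
        _ ≤ T.card := Finset.card_le_card hsub
    omega
  apply le_antisymm
  · exact Nat.sInf_le ⟨W, hWcard, hWres⟩
  · have hne : {k | ∃ T : Finset (Fin r ⊕ Fin s), T.card = k ∧ Resolves G ↑T}.Nonempty :=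
      ⟨r + s - 2, W, hWcard, hWres⟩
    obtain ⟨T, hTcard, hTres⟩ := Nat.sInf_mem hne
    rw [metricDim, ← hTcard]
    exact hlb T hTres

end Aux

theorem stmt9 (r s : ℕ) (hr : 2 ≤ r) (hs : 2 ≤ s) :
    metricDim (completeBipartiteGraph (Fin r) (Fin s)) = r + s - 2 :=
  key hr hs
end

section
/- Let G be a connected graph of order n ≥ 4 with girth 4 and β(G) = n - 2. Then G is a complete bipartite graph K_{r,s} with r,s ≥ 2. -/
open SimpleGraph

namespace Stmt18Aux

set_option linter.unusedSectionVars false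

variable {V : Type*} [Fintype V] {G : SimpleGraph V}

lemma tri_free (hg : G.girth = 4) {x y z : V} (hxy : G.Adj x y) (hyz : G.Adj y z)
    (hxz : G.Adj x z) : False := by
  have hzx : G.Adj z x := hxz.symm
  set c : G.Walk x x := Walk.cons hxy (Walk.cons hyz (Walk.cons hzx Walk.nil)) with hc
  have hcyc : c.IsCycle := by
    have h1 := hxy.ne; have h2 := hyz.ne; have h3 := hxz.ne
    have h1' := hxy.ne'; have h2' := hyz.ne'; have h3' := hxz.ne'
    rw [Walk.isCycle_def, Walk.isTrail_def]
    refine ⟨?_, by simp [hc], ?_⟩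
    · simp only [hc, Walk.edges_cons, Walk.edges_nil, List.nodup_cons, List.mem_cons,
        List.not_mem_nil, or_false, List.nodup_nil, and_true, List.mem_singleton, Sym2.eq_iff]
      tauto
    · simp only [hc, Walk.support_cons, Walk.support_nil, List.tail_cons, List.nodup_cons,
        List.mem_cons, List.not_mem_nil, or_false, List.mem_singleton, List.nodup_nil, and_true]
      tauto
  have h4 : G.egirth = 4 := by
    have hne : G.egirth ≠ ⊤ := by
      intro h
      rw [SimpleGraph.girth, h] at hg
      simp at hg
    rw [← ENat.coe_toNat hne]
    rw [SimpleGraph.girth] at hg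
    rw [hg]; rfl
  have h3 : G.egirth ≤ (c.length : ℕ∞) := le_egirth.mp le_rfl x c hcyc
  rw [h4] at h3
  have : c.length = 3 := by simp [hc]
  rw [this] at h3
  exact absurd h3 (by norm_num)

lemma dist_getVert_le (hG : G.Connected) {u v : V} (p : G.Walk u v) (i : ℕ) :
    G.dist u (p.getVert i) ≤ i := by
  induction i with
  | zero => simp [p.getVert_zero]
  | succ i ih =>
    by_cases hi : i < p.length
    · have hadj := p.adj_getVert_succ hi
      have h1 : G.dist (p.getVert i) (p.getVert (i + 1)) = 1 := dist_eq_one_iff_adj.mpr hadj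
      have := hG.dist_triangle (u := u) (v := p.getVert i) (w := p.getVert (i + 1))
      omega
    · have h1 : p.getVert (i + 1) = v := p.getVert_of_length_le (by omega)
      have h2 : p.getVert i = v := p.getVert_of_length_le (by omega)
      rw [h1, ← h2]
      omega

lemma dist_getVert_eq (hG : G.Connected) {u v : V} (p : G.Walk u v)
    (hp : p.length = G.dist u v) {i : ℕ} (hi : i ≤ p.length) :
    G.dist u (p.getVert i) = i := by
  refine le_antisymm (dist_getVert_le hG p i) ?_
  have h2 : G.dist (p.getVert i) v ≤ p.length - i := by
    have := dist_getVert_le hG p.reverse (p.length - i)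
    rw [p.getVert_reverse, Nat.sub_sub_self hi] at this
    rwa [SimpleGraph.dist_comm]
  have h3 := hG.dist_triangle (u := u) (v := p.getVert i) (w := v)
  omega


lemma key3 (hG : G.Connected) (hn : 4 ≤ Fintype.card V)
    (hb : metricDim G = Fintype.card V - 2) {u v w : V}
    (huv : u ≠ v) (huw : u ≠ w) (hvw : v ≠ w) :
    (∀ z ∉ ({u, v, w} : Set V), G.dist u z = G.dist v z) ∨
    (∀ z ∉ ({u, v, w} : Set V), G.dist u z = G.dist w z) ∨
    (∀ z ∉ ({u, v, w} : Set V), G.dist v z = G.dist w z) := by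
  classical
  by_contra hcon
  push_neg at hcon
  obtain ⟨⟨z1, hz1, hd1⟩, ⟨z2, hz2, hd2⟩, ⟨z3, hz3, hd3⟩⟩ := hcon
  set W : Finset V := Finset.univ \ {u, v, w} with hW
  have hmem : ∀ z : V, z ∈ W ↔ z ∉ ({u, v, w} : Set V) := by
    intro z; simp [hW]
  have hres : Resolves G ↑W := by
    intro a b hab
    by_cases ha : a ∈ ({u, v, w} : Set V)
    · by_cases hbm : b ∈ ({u, v, w} : Set V)
      · simp only [Set.mem_insert_iff, Set.mem_singleton_iff] at ha hbm
        rcases ha with rfl | rfl | rfl <;> rcases hbm with rfl | rfl | rfl <;>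
          first
          | exact absurd rfl hab
          | exact ⟨z1, (hmem z1).mpr hz1, hd1⟩
          | exact ⟨z2, (hmem z2).mpr hz2, hd2⟩
          | exact ⟨z3, (hmem z3).mpr hz3, hd3⟩
          | exact ⟨z1, (hmem z1).mpr hz1, Ne.symm hd1⟩
          | exact ⟨z2, (hmem z2).mpr hz2, Ne.symm hd2⟩
          | exact ⟨z3, (hmem z3).mpr hz3, Ne.symm hd3⟩
      · refine ⟨b, (hmem b).mpr hbm, ?_⟩
        have hpos : 0 < G.dist a b := hG.pos_dist_of_ne hab
        simp only [SimpleGraph.dist_self]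
        omega
    · refine ⟨a, (hmem a).mpr ha, ?_⟩
      have hpos : 0 < G.dist b a := hG.pos_dist_of_ne (Ne.symm hab)
      simp only [SimpleGraph.dist_self]
      omega
  have hcard : W.card = Fintype.card V - 3 := by
    rw [hW, Finset.card_sdiff_of_subset (Finset.subset_univ _), Finset.card_univ]
    congr 1
    rw [Finset.card_insert_of_notMem (by simp [huv, huw]),
      Finset.card_insert_of_notMem (by simp [hvw]), Finset.card_singleton]
  have hle : metricDim G ≤ Fintype.card V - 3 :=
    Nat.sInf_le ⟨W, hcard, hres⟩
  omega

lemma dist_le_two (hG : G.Connected) (hn : 4 ≤ Fintype.card V)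
    (hb : metricDim G = Fintype.card V - 2) (u v : V) : G.dist u v ≤ 2 := by
  by_contra hcon
  push_neg at hcon
  obtain ⟨p, hp⟩ := hG.exists_walk_length_eq_dist u v
  have hlen : 3 ≤ p.length := by omega
  set x1 := p.getVert 1
  set x2 := p.getVert 2
  set x3 := p.getVert 3
  have hd1 : G.dist u x1 = 1 := dist_getVert_eq hG p hp (by omega)
  have hd2 : G.dist u x2 = 2 := dist_getVert_eq hG p hp (by omega)
  have hd3 : G.dist u x3 = 3 := dist_getVert_eq hG p hp (by omega)
  have h12 : x1 ≠ x2 := fun h => by rw [h] at hd1; omega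
  have h13 : x1 ≠ x3 := fun h => by rw [h] at hd1; omega
  have h23 : x2 ≠ x3 := fun h => by rw [h] at hd2; omega
  have hu : u ∉ ({x1, x2, x3} : Set V) := by
    intro h
    simp only [Set.mem_insert_iff, Set.mem_singleton_iff] at h
    rcases h with h | h | h
    · rw [← h, SimpleGraph.dist_self] at hd1; omega
    · rw [← h, SimpleGraph.dist_self] at hd2; omega
    · rw [← h, SimpleGraph.dist_self] at hd3; omega
  rcases key3 hG hn hb h12 h13 h23 with h | h | h <;>
  · have := h u hu
    rw [SimpleGraph.dist_comm (u := u) (v := x1)] at hd1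
    rw [SimpleGraph.dist_comm (u := u) (v := x2)] at hd2
    rw [SimpleGraph.dist_comm (u := u) (v := x3)] at hd3
    omega

lemma midpoint (hG : G.Connected) (hn : 4 ≤ Fintype.card V)
    (hb : metricDim G = Fintype.card V - 2) {u v : V} (huv : u ≠ v)
    (hna : ¬ G.Adj u v) : ∃ m, G.Adj u m ∧ G.Adj m v := by
  have h2 : G.dist u v = 2 := by
    have hle := dist_le_two hG hn hb u v
    have hpos := hG.pos_dist_of_ne huv
    have hne1 : G.dist u v ≠ 1 := fun h => hna (dist_eq_one_iff_adj.mp h)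
    omega
  obtain ⟨p, hp⟩ := hG.exists_walk_length_eq_dist u v
  rw [h2] at hp
  refine ⟨p.getVert 1, ?_, ?_⟩
  · have := p.adj_getVert_succ (i := 0) (by omega)
    rwa [p.getVert_zero] at this
  · have := p.adj_getVert_succ (i := 1) (by omega)
    rw [show (1 + 1 : ℕ) = 2 from rfl, ← hp] at this
    rwa [p.getVert_length] at this


lemma adj_iff_of_twin {x y z : V} (htw : G.dist x z = G.dist y z) :
    G.Adj x z ↔ G.Adj y z := by
  constructor <;> intro ha
  · exact dist_eq_one_iff_adj.mp (by rw [← htw]; exact dist_eq_one_iff_adj.mpr ha)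
  · exact dist_eq_one_iff_adj.mp (by rw [htw]; exact dist_eq_one_iff_adj.mpr ha)

lemma noBadTriple (hG : G.Connected) (hn : 4 ≤ Fintype.card V)
    (hb : metricDim G = Fintype.card V - 2) (hg : G.girth = 4) {a b c : V}
    (hab : G.Adj a b) (hca : ¬ G.Adj a c) (hcb : ¬ G.Adj b c)
    (hac : a ≠ c) (hbc : b ≠ c) : False := by
  obtain ⟨z0, hz1, hz2⟩ := midpoint hG hn hb hac hca
  have hz0b : z0 ≠ b := fun h => hcb (h ▸ hz2)
  have haz0 : a ≠ z0 := hz1.ne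
  have hcz0 : c ≠ z0 := hz2.ne'
  have hbs : b ∉ ({a, c, z0} : Set V) := by
    simp only [Set.mem_insert_iff, Set.mem_singleton_iff]
    push_neg
    exact ⟨hab.ne', hbc, hz0b.symm⟩
  rcases key3 hG hn hb hac haz0 hcz0 with h | h | h
  · -- twin (a, c) on {a, c, z0} : test z = b
    have := (adj_iff_of_twin (h b hbs)).mp hab
    exact hcb this.symm
  · -- twin (a, z0) : test z = b gives triangle a b z0
    have hz0b' : G.Adj z0 b := (adj_iff_of_twin (h b hbs)).mp hab
    exact tri_free hg hab hz0b'.symm hz1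
  · -- twin (c, z0) : N(c) = {z0}
    have hNc : ∀ z, G.Adj c z → z = z0 := by
      intro z hz
      by_contra hzz0
      have hzs : z ∉ ({a, c, z0} : Set V) := by
        simp only [Set.mem_insert_iff, Set.mem_singleton_iff]
        push_neg
        refine ⟨fun hh => hca (hh ▸ hz).symm, fun hh => G.loopless.irrefl c (hh ▸ hz), hzz0⟩
      have hz0z : G.Adj z0 z := (adj_iff_of_twin (h z hzs)).mp hz
      exact tri_free hg hz2.symm hz0z hz
    obtain ⟨m, hm1, hm2⟩ := midpoint hG hn hb hbc hcb
    have hmz0 : m = z0 := hNc m hm2.symm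
    have : G.Adj c b := (adj_iff_of_twin (h b hbs)).mpr (hmz0 ▸ hm1).symm
    exact hcb this.symm


lemma exists_C4 (hg : G.girth = 4) :
    ∃ a b c d : V, G.Adj a b ∧ G.Adj b c ∧ G.Adj c d ∧ G.Adj d a ∧ a ≠ c ∧ b ≠ d := by
  have hnac : ¬ G.IsAcyclic := by
    intro h
    rw [girth_eq_zero.mpr h] at hg
    omega
  obtain ⟨a, w, hcyc, hlen⟩ := exists_girth_eq_length.mpr hnac
  rw [hg] at hlen
  cases w with
  | nil => simp at hlen
  | cons h1 q1 =>
    cases q1 with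
    | nil => simp at hlen
    | cons h2 q2 =>
      cases q2 with
      | nil => simp at hlen
      | cons h3 q3 =>
        cases q3 with
        | nil => simp at hlen
        | cons h4 q4 =>
          cases q4 with
          | cons h5 q5 => simp [Walk.length_cons] at hlen
          | nil =>
            rw [Walk.isCycle_def] at hcyc
            obtain ⟨-, -, hnd⟩ := hcyc
            simp only [Walk.support_cons, Walk.support_nil, List.tail_cons,
              List.nodup_cons, List.mem_cons, List.mem_singleton,
              List.not_mem_nil, or_false, List.nodup_nil, and_true] at hnd
            push_neg at hnd
            exact ⟨_, _, _, _, h1, h2, h3, h4, (hnd.2.1.2).symm, hnd.1.2.1⟩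

end Stmt18Aux

open Stmt18Aux
theorem stmt18 {V : Type*} [Fintype V] (G : SimpleGraph V) (hG : G.Connected)
    (hn : 4 ≤ Fintype.card V) (hg : G.girth = 4)
    (hb : metricDim G = Fintype.card V - 2) :
    ∃ r s : ℕ, 2 ≤ r ∧ 2 ≤ s ∧
      Nonempty (G ≃g completeBipartiteGraph (Fin r) (Fin s)) := by
  classical
  obtain ⟨v1, v2, v3, v4, h12, h23, h34, h41, hne13, hne24⟩ := exists_C4 (G := G) hg
  set P : V → Prop := fun x => G.Adj v2 x with hP
  -- cover: anything not adjacent to v2 is adjacent to v1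
  have hcov : ∀ x, ¬ G.Adj v2 x → G.Adj v1 x := by
    intro x hx
    by_cases hxb : x = v2
    · subst hxb; exact h12
    by_contra hax
    have hxa : v1 ≠ x := fun h => hx (h ▸ h12.symm)
    exact noBadTriple hG hn hb hg h12 hax hx hxa (Ne.symm hxb)
  -- cross adjacency
  have hcross : ∀ x y, G.Adj v2 x → ¬ G.Adj v2 y → G.Adj x y := by
    intro x y hx hy
    by_cases hxv1 : x = v1
    · subst hxv1; exact hcov y hy
    by_cases hyv2 : y = v2
    · subst hyv2; exact hx.symm
    by_contra hxy
    have hay : G.Adj v1 y := hcov y hy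
    have hax : ¬ G.Adj v1 x := fun h => tri_free hg h12 hx h
    have hxney : y ≠ x := fun h => hy (h ▸ hx)
    exact noBadTriple hG hn hb hg hay hax (fun h => hxy h.symm) (Ne.symm hxv1) hxney
  have hadj : ∀ x y, G.Adj x y ↔ ((P x ∧ ¬ P y) ∨ (¬ P x ∧ P y)) := by
    intro x y
    constructor
    · intro h
      have h1 : ¬ (G.Adj v2 x ∧ G.Adj v2 y) := fun ⟨ha, hb'⟩ => tri_free hg ha h hb'
      have h2 : G.Adj v2 x ∨ G.Adj v2 y := by
        by_contra hcon
        push_neg at hcon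
        exact tri_free hg (hcov x hcon.1) h (hcov y hcon.2)
      simp only [hP]
      tauto
    · rintro (⟨hx, hy⟩ | ⟨hx, hy⟩)
      · exact hcross x y hx hy
      · exact (hcross y x hy hx).symm
  refine ⟨Fintype.card {x // P x}, Fintype.card {x // ¬ P x}, ?_, ?_, ?_⟩
  · refine Fintype.one_lt_card_iff_nontrivial.mpr ?_
    exact ⟨⟨⟨v1, h12.symm⟩, ⟨v3, h23⟩, fun h => hne13 (congrArg Subtype.val h)⟩⟩
  · refine Fintype.one_lt_card_iff_nontrivial.mpr ?_
    have hv2 : ¬ P v2 := G.loopless.irrefl v2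
    have hv4 : ¬ P v4 := fun h => tri_free hg h h41 h12.symm
    exact ⟨⟨⟨v2, hv2⟩, ⟨v4, hv4⟩, fun h => hne24 (congrArg Subtype.val h)⟩⟩
  · set eA := Fintype.equivFin {x // P x} with heA
    set eB := Fintype.equivFin {x // ¬ P x} with heB
    set e : V ≃ (Fin (Fintype.card {x // P x}) ⊕ Fin (Fintype.card {x // ¬ P x})) :=
      (Equiv.sumCompl P).symm.trans (Equiv.sumCongr eA eB) with he
    have heL : ∀ x (h : P x), e x = Sum.inl (eA ⟨x, h⟩) := by
      intro x h
      simp [he, Equiv.sumCompl_symm_apply_of_pos (p := P) (a := x) h]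
    have heR : ∀ x (h : ¬ P x), e x = Sum.inr (eB ⟨x, h⟩) := by
      intro x h
      simp [he, Equiv.sumCompl_symm_apply_of_neg (p := P) (a := x) h]
    refine ⟨⟨e, ?_⟩⟩
    intro x y
    rw [hadj x y]
    by_cases hx : P x <;> by_cases hy : P y
    · simp [heL x hx, heL y hy, hx, hy]
    · simp [heL x hx, heR y hy, hx, hy]
    · simp [heR x hx, heL y hy, hx, hy]
    · simp [heR x hx, heR y hy, hx, hy]
end

section
/- Let G be a connected graph containing a cycle, and let C = (v_1,...,v_g,v_1) be a shortest cycle in G. Then V(G) \ {v_3, v_4, ..., v_g} is a resolving set for G. -/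
open SimpleGraph

namespace MyAux
variable {V : Type*} {G : SimpleGraph V} {u v : V}

lemma length_drop (p : G.Walk u v) (n : ℕ) : (p.drop n).length = p.length - n := by
  induction p generalizing n with
  | nil => simp [Walk.drop]
  | cons h q ih =>
    cases n with
    | zero => simp [Walk.drop]
    | succ n => simp [Walk.drop, ih]

lemma getVert_drop (p : G.Walk u v) (n k : ℕ) :
    (p.drop n).getVert k = p.getVert (n + k) := by
  induction p generalizing n with
  | nil => simp [Walk.drop, Walk.getVert]
  | cons h q ih =>
    cases n with
    | zero => simp [Walk.drop]
    | succ n => simp [Walk.drop, ih, Nat.succ_add, Walk.getVert_cons_succ]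

lemma support_drop (p : G.Walk u v) (n : ℕ) (hn : n ≤ p.length) :
    (p.drop n).support = p.support.drop n := by
  induction p generalizing n with
  | nil =>
      simp only [Walk.length_nil, Nat.le_zero] at hn
      subst hn; simp [Walk.drop]
  | cons h q ih =>
    cases n with
    | zero => simp [Walk.drop]
    | succ n =>
      simp only [Walk.length_cons, Nat.succ_le_succ_iff] at hn
      simp [Walk.drop, ih _ hn]

end MyAux

namespace MyAux2
open Walk
variable {V : Type*} {G : SimpleGraph V} {u v : V}
open MyAux

lemma isPath_drop {p : G.Walk u v} (hp : p.IsPath) (n : ℕ) (hn : n ≤ p.length) :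
    (p.drop n).IsPath := by
  rw [Walk.isPath_def, support_drop p n hn]
  exact (List.drop_sublist n _).nodup hp.support_nodup

lemma cycle_isPath_drop {p : G.Walk v v} (hp : p.IsCycle) {n : ℕ} (h1 : 1 ≤ n)
    (hn : n ≤ p.length) : (p.drop n).IsPath := by
  rw [Walk.isPath_def, support_drop p n hn]
  have h2 : p.support.drop n = p.support.tail.drop (n - 1) := by
    rw [← List.drop_one, List.drop_drop]
    congr 1
    omega
  rw [h2]
  exact (List.drop_sublist _ _).nodup hp.support_nodup

lemma isCycle_reverse {p : G.Walk v v} (hp : p.IsCycle) : p.reverse.IsCycle := by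
  rw [Walk.isCycle_def] at hp ⊢
  obtain ⟨ht, hnil, hnd⟩ := hp
  refine ⟨Walk.IsTrail.reverse _ ht, ?_, ?_⟩
  · intro h
    apply hnil
    rw [← Walk.nil_iff_eq_nil, ← Walk.length_eq_zero_iff] at h ⊢
    simpa using h
  · obtain ⟨t, hcons⟩ : ∃ t, p.support = v :: t := ⟨_, Walk.support_eq_cons p⟩
    rw [hcons, List.tail_cons] at hnd
    have hlen_t : t.length = p.length := by
      have := Walk.length_support p
      rw [hcons] at this
      simpa using this
    have hne : t ≠ [] := by
      intro h
      apply hnil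
      rw [← Walk.nil_iff_eq_nil, ← Walk.length_eq_zero_iff, ← hlen_t, h, List.length_nil]
    have h1 : p.support.getLast? = some v := by
      rw [List.getLast?_eq_getLast (Walk.support_ne_nil p), Walk.getLast_support]
    have h2 : t.getLast? = some v := by
      rw [hcons] at h1
      cases t with
      | nil => exact absurd rfl hne
      | cons b t' => rwa [List.getLast?_cons_cons] at h1
    have hlast : t.getLast hne = v := by
      have h3 := List.getLast?_eq_getLast hne
      rw [h3] at h2
      exact Option.some.inj h2
    have hdecomp : t = t.dropLast ++ [v] := by
      conv_lhs => rw [← List.dropLast_append_getLast hne]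
      rw [hlast]
    have hd1 : t.dropLast.Nodup := (List.dropLast_sublist t).nodup hnd
    have hd2 : v ∉ t.dropLast := by
      have h4 := hdecomp ▸ hnd
      rw [List.nodup_append] at h4
      intro hmem
      exact h4.2.2 v hmem v (List.mem_singleton_self v) rfl
    have ht' : t.reverse = v :: t.dropLast.reverse := by
      conv_lhs => rw [hdecomp]
      simp
    rw [Walk.support_reverse, hcons, List.reverse_cons, ht']
    simp only [List.cons_append, List.tail_cons]
    rw [List.nodup_append]
    refine ⟨by simpa using hd1, List.nodup_singleton v, ?_⟩
    intro a ha b hb hab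
    rw [List.mem_singleton] at hb
    subst hb hab
    exact hd2 (by simpa using ha)

end MyAux2

namespace MyAux3
variable {V : Type*} {G : SimpleGraph V}

lemma exists_cycle_of_two_paths [DecidableEq V] :
    ∀ (n : ℕ) {x y : V} (P Q : G.Walk x y), P.IsPath → Q.IsPath → P ≠ Q →
      3 * P.length + Q.length ≤ n →
      ∃ (z : V) (c : G.Walk z z), c.IsCycle ∧ c.length ≤ P.length + Q.length := by
  intro n
  induction n using Nat.strong_induction_on with
  | _ n IH =>
  intro x y P Q hP hQ hne hlen
  cases P with
  | nil =>
    rw [Walk.isPath_iff_eq_nil] at hQ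
    exact absurd hQ.symm hne
  | @cons _ b _ h P' =>
    cases Q with
    | nil =>
      rw [Walk.isPath_iff_eq_nil] at hP
      simp at hP
    | @cons _ c _ h' Q' =>
      rw [Walk.cons_isPath_iff] at hP hQ
      by_cases hbc : b = c
      · subst hbc
        have hne' : P' ≠ Q' := fun hh => hne (by rw [hh])
        obtain ⟨z, cc, hcc, hlc⟩ := IH (3 * P'.length + Q'.length)
          (by simp only [Walk.length_cons] at hlen; omega) P' Q' hP.1 hQ.1 hne' le_rfl
        exact ⟨z, cc, hcc, by simp only [Walk.length_cons]; omega⟩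
      · by_cases hbQ : b ∈ Q'.support
        · by_cases hPQ : P' = Q'.dropUntil b hbQ
          · -- build the cycle directly
            have hQ₁path : (Walk.cons h' (Q'.takeUntil b hbQ)).IsPath := by
              rw [Walk.cons_isPath_iff]
              exact ⟨hQ.1.takeUntil hbQ,
                fun hx => hQ.2 (Q'.support_takeUntil_subset hbQ hx)⟩
            have hedge : s(x, b) ∉ (Walk.cons h' (Q'.takeUntil b hbQ)).reverse.edges := by
              rw [Walk.edges_reverse, List.mem_reverse, Walk.edges_cons]
              intro hmem
              rcases List.mem_cons.mp hmem with heq | hmem'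
              · rw [Sym2.eq_iff] at heq
                rcases heq with ⟨-, h1⟩ | ⟨h1, -⟩
                · exact hbc h1
                · exact h'.ne h1
              · exact hQ.2 (Q'.support_takeUntil_subset hbQ
                  (Walk.fst_mem_support_of_mem_edges _ hmem'))
            have hcyc := SimpleGraph.Path.cons_isCycle
              ⟨(Walk.cons h' (Q'.takeUntil b hbQ)).reverse, hQ₁path.reverse⟩ h hedge
            refine ⟨x, _, hcyc, ?_⟩
            have h1 := Q'.length_takeUntil_le hbQ
            simp only [Walk.length_cons, Walk.length_reverse]
            omega
          · have h2 : (Q'.dropUntil b hbQ).length ≤ Q'.length := Q'.length_dropUntil_le hbQ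
            obtain ⟨z, cc, hcc, hlc⟩ := IH (3 * P'.length + (Q'.dropUntil b hbQ).length)
              (by simp only [Walk.length_cons] at hlen; omega) P' (Q'.dropUntil b hbQ)
              hP.1 (hQ.1.dropUntil hbQ) hPQ le_rfl
            exact ⟨z, cc, hcc, by simp only [Walk.length_cons]; omega⟩
        · have hR : (Walk.cons h.symm (Walk.cons h' Q')).IsPath := by
            rw [Walk.cons_isPath_iff, Walk.cons_isPath_iff, Walk.support_cons]
            exact ⟨⟨hQ.1, hQ.2⟩, by
              intro hmem
              rcases List.mem_cons.mp hmem with h1 | h1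
              · exact h.ne' h1
              · exact hbQ h1⟩
          have hne' : P' ≠ Walk.cons h.symm (Walk.cons h' Q') := by
            intro heq
            apply hP.2
            rw [heq, Walk.support_cons]
            exact List.mem_cons_of_mem _ (Walk.start_mem_support _)
          obtain ⟨z, cc, hcc, hlc⟩ := IH
            (3 * P'.length + (Walk.cons h.symm (Walk.cons h' Q')).length)
            (by simp only [Walk.length_cons] at hlen ⊢; omega) P' _
            hP.1 hR hne' le_rfl
          exact ⟨z, cc, hcc, by simp only [Walk.length_cons] at hlc ⊢; omega⟩

end MyAux3

namespace MyAux4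
open MyAux MyAux2 MyAux3
variable {V : Type*} {G : SimpleGraph V}

lemma girth_le_length_of_cycle {z : V} {c : G.Walk z z} (hc : c.IsCycle) :
    G.girth ≤ c.length := by
  have h1 : G.egirth ≤ (c.length : ℕ∞) := by
    rw [SimpleGraph.egirth]
    exact iInf_le_of_le z (iInf_le_of_le c (iInf_le _ hc))
  have h2 := ENat.toNat_le_toNat h1 (by simp)
  simpa [SimpleGraph.girth] using h2

lemma dist_getVert_cycle {v : V} {p : G.Walk v v} (hp : p.IsCycle)
    (hg : p.length = G.girth) {a b : ℕ} (hab : a < b) (hb : b + 1 ≤ p.length) :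
    G.dist (p.getVert a) (p.getVert b) = min (b - a) (p.length - (b - a)) := by
  classical
  set g := p.length with hgdef
  -- the direct arc: a path from getVert b to getVert a of length b - a
  obtain ⟨A, hApath, hAlen⟩ :
      ∃ A : G.Walk (p.getVert b) (p.getVert a), A.IsPath ∧ A.length = b - a := by
    rcases Nat.eq_zero_or_pos a with ha0 | ha1
    · subst ha0
      have hstart : p.reverse.getVert (g - b) = p.getVert b := by
        rw [Walk.getVert_reverse]
        congr 1
        omega
      have hpath : (p.reverse.drop (g - b)).IsPath := by
        apply cycle_isPath_drop (isCycle_reverse hp) (by omega)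
        rw [Walk.length_reverse]
        omega
      refine ⟨((p.reverse.drop (g - b)).copy hstart rfl).copy rfl (by simp), ?_, ?_⟩
      · simpa using hpath
      · simp only [Walk.length_copy]
        rw [length_drop, Walk.length_reverse]
        omega
    · have hq : (p.drop a).IsPath := cycle_isPath_drop hp ha1 (by omega)
      have hstart : (p.drop a).reverse.getVert (g - b) = p.getVert b := by
        rw [Walk.getVert_reverse, length_drop, getVert_drop]
        congr 1
        omega
      have hpath : ((p.drop a).reverse.drop (g - b)).IsPath := by
        apply isPath_drop hq.reverse
        rw [Walk.length_reverse, length_drop]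
        omega
      refine ⟨((p.drop a).reverse.drop (g - b)).copy hstart rfl, by simpa using hpath, ?_⟩
      simp only [Walk.length_copy]
      rw [length_drop, Walk.length_reverse, length_drop]
      omega
  -- the complementary walk, of length g - b + a
  have hBle : G.dist (p.getVert b) (p.getVert a) ≤ g - b + a := by
    have hend : p.reverse.getVert (g - a) = p.getVert a := by
      rw [Walk.getVert_reverse]
      congr 1
      omega
    have := SimpleGraph.dist_le
      (((p.drop b).append (p.reverse.drop (g - a)).reverse).copy rfl hend)
    rw [Walk.length_copy, Walk.length_append, length_drop, Walk.length_reverse,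
      length_drop, Walk.length_reverse] at this
    calc G.dist (p.getVert b) (p.getVert a) ≤ g - b + (g - (g - a)) := this
    _ = g - b + a := by omega
  have hub : G.dist (p.getVert b) (p.getVert a) ≤ min (b - a) (g - (b - a)) := by
    refine le_min ?_ ?_
    · have := SimpleGraph.dist_le A
      omega
    · omega
  have hlb : min (b - a) (g - (b - a)) ≤ G.dist (p.getVert b) (p.getVert a) := by
    by_contra hcon
    push_neg at hcon
    obtain ⟨P, hPpath, hPlen⟩ := (A.reachable).exists_path_of_dist
    have hPA : P ≠ A := by
      intro hh
      rw [hh] at hPlen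
      omega
    obtain ⟨z, c, hc, hlc⟩ := exists_cycle_of_two_paths (3 * P.length + A.length)
      P A hPpath hApath hPA le_rfl
    have := girth_le_length_of_cycle hc
    omega
  rw [SimpleGraph.dist_comm] at hub hlb
  omega

end MyAux4


theorem stmt19 {V : Type*} [Fintype V] (G : SimpleGraph V) (hG : G.Connected)
    (hc : ¬ G.IsAcyclic) (v : V) (p : G.Walk v v) (hp : p.IsCycle)
    (hlen : p.length = G.girth) :
    Resolves G (({x : V | x ∈ p.support} \ {v, p.getVert 1})ᶜ) := by
  classical
  intro u₁ u₂ hne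
  set W : Set V := ({x : V | x ∈ p.support} \ {v, p.getVert 1})ᶜ with hW
  have hmem : ∀ x, x ∈ W ↔ ¬(x ∈ p.support ∧ ¬(x = v ∨ x = p.getVert 1)) := by
    intro x
    simp only [hW, Set.mem_compl_iff, Set.mem_diff, Set.mem_setOf_eq, Set.mem_insert_iff,
      Set.mem_singleton_iff]
  by_cases h1 : u₁ ∈ W
  · exact ⟨u₁, h1, by
      rw [SimpleGraph.dist_self]
      exact (hG.pos_dist_of_ne hne.symm).ne⟩
  by_cases h2 : u₂ ∈ W
  · exact ⟨u₂, h2, by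
      rw [SimpleGraph.dist_self]
      exact (hG.pos_dist_of_ne hne).ne'⟩
  rw [hmem] at h1 h2
  push_neg at h1 h2
  obtain ⟨hs1, hv1, hv1'⟩ : u₁ ∈ p.support ∧ u₁ ≠ v ∧ u₁ ≠ p.getVert 1 := by tauto
  obtain ⟨hs2, hv2, hv2'⟩ : u₂ ∈ p.support ∧ u₂ ≠ v ∧ u₂ ≠ p.getVert 1 := by tauto
  obtain ⟨i, hieq, hile⟩ := Walk.mem_support_iff_exists_getVert.mp hs1
  obtain ⟨j, hjeq, hjle⟩ := Walk.mem_support_iff_exists_getVert.mp hs2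
  set g := p.length with hgdef
  have hg3 : 3 ≤ g := hp.three_le_length
  have hi0 : i ≠ 0 := by rintro rfl; rw [Walk.getVert_zero] at hieq; exact hv1 hieq.symm
  have hi1 : i ≠ 1 := by rintro rfl; exact hv1' hieq.symm
  have hig : i ≠ g := by rintro rfl; rw [Walk.getVert_length] at hieq; exact hv1 hieq.symm
  have hj0 : j ≠ 0 := by rintro rfl; rw [Walk.getVert_zero] at hjeq; exact hv2 hjeq.symm
  have hj1 : j ≠ 1 := by rintro rfl; exact hv2' hjeq.symm
  have hjg : j ≠ g := by rintro rfl; rw [Walk.getVert_length] at hjeq; exact hv2 hjeq.symm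
  have hij : i ≠ j := by rintro rfl; rw [hieq] at hjeq; exact hne hjeq
  have hvW : v ∈ W := by rw [hmem]; tauto
  have hv1W : p.getVert 1 ∈ W := by rw [hmem]; tauto
  by_cases hd0 : G.dist u₁ v = G.dist u₂ v
  · by_cases hd1 : G.dist u₁ (p.getVert 1) = G.dist u₂ (p.getVert 1)
    · exfalso
      have d0i : G.dist v u₁ = min i (g - i) := by
        have := MyAux4.dist_getVert_cycle hp hlen (a := 0) (b := i)
          (by omega) (by omega)
        rw [Walk.getVert_zero, hieq] at this
        simpa using this
      have d0j : G.dist v u₂ = min j (g - j) := by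
        have := MyAux4.dist_getVert_cycle hp hlen (a := 0) (b := j)
          (by omega) (by omega)
        rw [Walk.getVert_zero, hjeq] at this
        simpa using this
      have d1i : G.dist (p.getVert 1) u₁ = min (i - 1) (g - (i - 1)) := by
        have := MyAux4.dist_getVert_cycle hp hlen (a := 1) (b := i)
          (by omega) (by omega)
        rwa [hieq] at this
      have d1j : G.dist (p.getVert 1) u₂ = min (j - 1) (g - (j - 1)) := by
        have := MyAux4.dist_getVert_cycle hp hlen (a := 1) (b := j)
          (by omega) (by omega)
        rwa [hjeq] at this
      rw [SimpleGraph.dist_comm (u := u₁) (v := v), SimpleGraph.dist_comm (u := u₂) (v := v)] at hd0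
      rw [SimpleGraph.dist_comm (u := u₁), SimpleGraph.dist_comm (u := u₂)] at hd1
      rw [d0i, d0j] at hd0
      rw [d1i, d1j] at hd1
      omega
    · exact ⟨p.getVert 1, hv1W, hd1⟩
  · exact ⟨v, hvW, hd0⟩
end
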